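/- arXiv:1102.2086 — 5 statements merged into one kernel-verified Lean document; each statement's English description precedes it below -/
import Mathlib

section
/- Let G be a 2-connected cubic graph, and let P be a path of minimum length among all paths whose two endvertices separate G, with endvertices x and y. Then the component C of G - {x,y} containing the interior of P receives exactly four edges from {x,y} (two from x and two from y). -/
open SimpleGraph

/-- A set `S` of vertices separates `G` if deleting `S` leaves a disconnected graph. -/
def Separates {V : Type*} (G : SimpleGraph V) (S : Set V) : Prop :=
  ¬ (G.induce (Sᶜ : Set V)).Preconnected

/-- `G` is 2-connected: connected, more than 2 vertices, and no cutvertex. -/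
def TwoConnected {V : Type*} (G : SimpleGraph V) : Prop :=
  (∃ a b c : V, a ≠ b ∧ a ≠ c ∧ b ≠ c) ∧ G.Connected ∧
    ∀ v : V, (G.induce ({v}ᶜ : Set V)).Connected

/-- `G` is cubic: every vertex has exactly 3 neighbours. -/
def IsCubic {V : Type*} (G : SimpleGraph V) : Prop :=
  ∀ v : V, (G.neighborSet v).ncard = 3

lemma aux {V : Type*} (G : SimpleGraph V) (h2 : TwoConnected G) (hcubic : IsCubic G)
    {x y : V} (S : Set V) (hS : S = ({x, y} : Set V))
    (P : G.Walk x y) (hP : P.IsPath) (hsep : Separates G S)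
    (hmin : ∀ (x' y' : V) (Q : G.Walk x' y'), Q.IsPath → Separates G ({x', y'} : Set V) →
      P.length ≤ Q.length)
    (C : (G.induce (Sᶜ : Set V)).ConnectedComponent)
    (hint : ∃ v ∈ P.support, v ≠ x ∧ v ≠ y)
    (hC : ∀ v ∈ P.support, ∀ h : v ∈ (Sᶜ : Set V),
      (G.induce (Sᶜ : Set V)).connectedComponentMk ⟨v, h⟩ = C) :
    {b : V | G.Adj x b ∧ ∃ h : b ∈ (Sᶜ : Set V),
      (G.induce (Sᶜ : Set V)).connectedComponentMk ⟨b, h⟩ = C}.ncard = 2 := by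
  classical
  subst hS
  have hmemK : ∀ v : V, v ∈ (({x, y} : Set V)ᶜ) ↔ v ≠ x ∧ v ≠ y := by
    intro v
    simp [Set.mem_compl_iff, not_or]
  have hxy : x ≠ y := by
    rintro rfl
    obtain ⟨v, hv, hvx, hvy⟩ := hint
    rw [Walk.isPath_iff_eq_nil.1 hP] at hv
    simp at hv
    exact hvx hv
  cases P with
  | nil =>
    obtain ⟨v, hv, hvx, _⟩ := hint
    simp at hv
    exact absurd hv hvx
  | @cons _ v₁ _ hadj Q =>
    rw [Walk.cons_isPath_iff] at hP
    obtain ⟨hQ, hxQ⟩ := hP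
    have hv₁x : v₁ ≠ x := fun h => hxQ (h ▸ Q.start_mem_support)
    have hv₁y : v₁ ≠ y := by
      rintro rfl
      obtain ⟨v, hv, hvx, hvy⟩ := hint
      rw [Walk.isPath_iff_eq_nil.1 hQ] at hv
      simp at hv
      rcases hv with h | h
      · exact hvx h
      · exact hvy h
    have hv₁K : v₁ ∈ (({x, y} : Set V)ᶜ) := (hmemK v₁).2 ⟨hv₁x, hv₁y⟩
    have hv₁C : (G.induce (({x, y} : Set V)ᶜ)).connectedComponentMk ⟨v₁, hv₁K⟩ = C :=
      hC v₁ (by simp [Walk.support_cons]) hv₁K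
    -- there is a vertex w in a component different from C
    have hw : ∃ w : V, ∃ hw : w ∈ (({x, y} : Set V)ᶜ),
        (G.induce (({x, y} : Set V)ᶜ)).connectedComponentMk ⟨w, hw⟩ ≠ C := by
      by_contra h
      push_neg at h
      apply hsep
      intro a b
      exact ConnectedComponent.exact ((h a.1 a.2).trans (h b.1 b.2).symm)
    obtain ⟨w, hwK, hwC⟩ := hw
    have hwy : w ≠ y := ((hmemK w).1 hwK).2
    have hxny : x ∈ ({y}ᶜ : Set V) := by simpa using hxy
    -- a neighbor p of x in a component different from C
    have claim : ∀ (a b : ({y}ᶜ : Set V)) (W : (G.induce ({y}ᶜ : Set V)).Walk a b),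
        (b : V) = x → ∀ ha : (a : V) ∈ (({x, y} : Set V)ᶜ),
        ∃ p, G.Adj x p ∧ ∃ hp : p ∈ (({x, y} : Set V)ᶜ),
          (G.induce (({x, y} : Set V)ᶜ)).Reachable ⟨p, hp⟩ ⟨a, ha⟩ := by
      intro a b W
      induction W with
      | nil =>
        intro hb ha
        exact absurd hb ((hmemK _).1 ha).1
      | @cons u v b h W ih =>
        intro hb ha
        have hG : G.Adj (u : V) (v : V) := h
        by_cases hvx : (v : V) = x
        · exact ⟨u, by rw [← hvx]; exact hG.symm, ha, Reachable.refl _⟩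
        · have hvK : (v : V) ∈ (({x, y} : Set V)ᶜ) := by
            exact (hmemK _).2 ⟨hvx, fun h => v.2 h⟩
          obtain ⟨p, hpx, hpK, hpr⟩ := ih hb hvK
          refine ⟨p, hpx, hpK, hpr.trans ?_⟩
          exact Adj.reachable (by exact hG.symm :
            (G.induce (({x, y} : Set V)ᶜ)).Adj ⟨v, hvK⟩ ⟨u, ha⟩)
    obtain ⟨W⟩ := (h2.2.2 y).preconnected ⟨w, by simpa using hwy⟩ ⟨x, hxny⟩
    obtain ⟨p, hpx, hpK, hpr⟩ := claim _ _ W rfl hwK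
    have hpC : (G.induce (({x, y} : Set V)ᶜ)).connectedComponentMk ⟨p, hpK⟩ ≠ C := by
      intro h
      exact hwC ((ConnectedComponent.sound hpr.symm).trans h)
    -- upper bound
    have hNfin : (G.neighborSet x).Finite :=
      Set.finite_of_ncard_pos (by rw [hcubic x]; omega)
    have hsub : {b : V | G.Adj x b ∧ ∃ h : b ∈ (({x, y} : Set V)ᶜ),
        (G.induce (({x, y} : Set V)ᶜ)).connectedComponentMk ⟨b, h⟩ = C}
        ⊆ G.neighborSet x \ {p} := by
      rintro b ⟨hb, hbK, hbC⟩
      refine ⟨hb, ?_⟩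
      rintro rfl
      exact hpC hbC
    have hle : {b : V | G.Adj x b ∧ ∃ h : b ∈ (({x, y} : Set V)ᶜ),
        (G.induce (({x, y} : Set V)ᶜ)).connectedComponentMk ⟨b, h⟩ = C}.ncard ≤ 2 := by
      have h1 := Set.ncard_le_ncard hsub hNfin.diff
      rwa [Set.ncard_diff_singleton_of_mem (show p ∈ G.neighborSet x from hpx), hcubic x] at h1
    refine le_antisymm hle ?_
    by_contra hlt
    push_neg at hlt
    have hv₁mem : v₁ ∈ {b : V | G.Adj x b ∧ ∃ h : b ∈ (({x, y} : Set V)ᶜ),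
        (G.induce (({x, y} : Set V)ᶜ)).connectedComponentMk ⟨b, h⟩ = C} := ⟨hadj, hv₁K, hv₁C⟩
    have hfinS : {b : V | G.Adj x b ∧ ∃ h : b ∈ (({x, y} : Set V)ᶜ),
        (G.induce (({x, y} : Set V)ᶜ)).connectedComponentMk ⟨b, h⟩ = C}.Finite :=
      hNfin.diff.subset hsub
    have hpos : 0 < {b : V | G.Adj x b ∧ ∃ h : b ∈ (({x, y} : Set V)ᶜ),
        (G.induce (({x, y} : Set V)ᶜ)).connectedComponentMk ⟨b, h⟩ = C}.ncard :=
      (Set.ncard_pos hfinS).2 ⟨v₁, hv₁mem⟩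
    have hone : {b : V | G.Adj x b ∧ ∃ h : b ∈ (({x, y} : Set V)ᶜ),
        (G.induce (({x, y} : Set V)ᶜ)).connectedComponentMk ⟨b, h⟩ = C}.ncard = 1 := by omega
    obtain ⟨a, ha⟩ := Set.ncard_eq_one.1 hone
    have hav₁ : a = v₁ := by
      have := ha ▸ hv₁mem
      simpa using this.symm
    subst hav₁
    have huniq : ∀ b, G.Adj x b → ∀ hb : b ∈ (({x, y} : Set V)ᶜ),
        (G.induce (({x, y} : Set V)ᶜ)).connectedComponentMk ⟨b, hb⟩ = C → b = a := by
      intro b hb hbK hbC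
      have : b ∈ {b : V | G.Adj x b ∧ ∃ h : b ∈ (({x, y} : Set V)ᶜ),
          (G.induce (({x, y} : Set V)ᶜ)).connectedComponentMk ⟨b, h⟩ = C} := ⟨hb, hbK, hbC⟩
      rw [ha] at this
      simpa using this
    -- a = v₁ has a neighbor c outside {x, y}
    have hNv : ((G.neighborSet a) \ {x, y}).Nonempty := by
      rw [Set.nonempty_iff_ne_empty]
      intro hemp
      have hsub2 : G.neighborSet a ⊆ ({x, y} : Set V) := by
        intro z hz
        by_contra hz2
        exact (Set.eq_empty_iff_forall_notMem.1 hemp z) ⟨hz, hz2⟩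
      have h3 := Set.ncard_le_ncard hsub2 (Set.toFinite _)
      rw [hcubic a] at h3
      have h4 : ({x, y} : Set V).ncard ≤ 2 :=
        le_trans (Set.ncard_insert_le x {y}) (by simp)
      omega
    obtain ⟨c, hca, hcxy⟩ := hNv
    have hcx : c ≠ x := fun h => hcxy (by simp [h])
    have hcy : c ≠ y := fun h => hcxy (by simp [h])
    have hcK : c ∈ (({x, y} : Set V)ᶜ) := (hmemK c).2 ⟨hcx, hcy⟩
    have hcC : (G.induce (({x, y} : Set V)ᶜ)).connectedComponentMk ⟨c, hcK⟩ = C := by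
      have hadj' : (G.induce (({x, y} : Set V)ᶜ)).Adj ⟨a, hv₁K⟩ ⟨c, hcK⟩ := by
        exact (hca : G.Adj a c)
      exact (ConnectedComponent.sound hadj'.reachable).symm.trans hv₁C
    have hax : a ≠ x := hv₁x
    have hac : a ≠ c := (hca : G.Adj a c).ne
    -- {a, y} separates G
    have hxT : x ∈ (({a, y} : Set V)ᶜ) := by
      simp [not_or]
      exact ⟨fun h => hax h.symm, hxy⟩
    have hcT : c ∈ (({a, y} : Set V)ᶜ) := by
      simp [not_or]
      exact ⟨fun h => hac h.symm, hcy⟩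
    have hsep' : Separates G ({a, y} : Set V) := by
      intro hpre
      have key : ∀ (u z : (({a, y} : Set V)ᶜ : Set V))
          (W : (G.induce (({a, y} : Set V)ᶜ)).Walk u z),
          ((u : V) = x ∨ ∃ h : (u : V) ∈ (({x, y} : Set V)ᶜ),
            (G.induce (({x, y} : Set V)ᶜ)).connectedComponentMk ⟨u, h⟩ ≠ C) →
          ((z : V) = x ∨ ∃ h : (z : V) ∈ (({x, y} : Set V)ᶜ),
            (G.induce (({x, y} : Set V)ᶜ)).connectedComponentMk ⟨z, h⟩ ≠ C) := by
        intro u z W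
        induction W with
        | nil => exact id
        | @cons u v z h W ih =>
          intro hu
          apply ih
          have hG : G.Adj (u : V) (v : V) := h
          have hva : (v : V) ≠ a := fun h => v.2 (Or.inl h)
          have hvy : (v : V) ≠ y := fun h => v.2 (Or.inr h)
          by_cases hvx : (v : V) = x
          · exact Or.inl hvx
          · have hvK : (v : V) ∈ (({x, y} : Set V)ᶜ) := (hmemK _).2 ⟨hvx, hvy⟩
            refine Or.inr ⟨hvK, ?_⟩
            rcases hu with hu | ⟨huK, huC⟩
            · intro hvC
              exact hva (huniq v (by rw [← hu]; exact hG) hvK hvC)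
            · intro hvC
              apply huC
              have hadj2 : (G.induce (({x, y} : Set V)ᶜ)).Adj ⟨u, huK⟩ ⟨v, hvK⟩ := hG
              exact (ConnectedComponent.sound hadj2.reachable).trans hvC
      obtain ⟨W⟩ := hpre ⟨x, hxT⟩ ⟨c, hcT⟩
      have := key _ _ W (Or.inl rfl)
      rcases this with h | ⟨hK, hCne⟩
      · exact hcx h
      · exact hCne hcC
    have := hmin a y Q hQ hsep'
    simp only [Walk.length_cons] at this
    omega
theorem stmt2 {V : Type*} (G : SimpleGraph V) (h2 : TwoConnected G) (hcubic : IsCubic G)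
    {x y : V} (P : G.Walk x y) (hP : P.IsPath) (hsep : Separates G ({x, y} : Set V))
    (hmin : ∀ (x' y' : V) (Q : G.Walk x' y'), Q.IsPath → Separates G ({x', y'} : Set V) →
      P.length ≤ Q.length)
    (C : (G.induce (({x, y} : Set V)ᶜ)).ConnectedComponent)
    -- the interior of `P` is nonempty and is contained in the component `C` of `G - {x,y}`
    (hint : ∃ v ∈ P.support, v ≠ x ∧ v ≠ y)
    (hC : ∀ v ∈ P.support, ∀ h : v ∈ (({x, y} : Set V)ᶜ),
      (G.induce (({x, y} : Set V)ᶜ)).connectedComponentMk ⟨v, h⟩ = C) :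
    {b : V | G.Adj x b ∧ ∃ h : b ∈ (({x, y} : Set V)ᶜ),
      (G.induce (({x, y} : Set V)ᶜ)).connectedComponentMk ⟨b, h⟩ = C}.ncard = 2 ∧
    {b : V | G.Adj y b ∧ ∃ h : b ∈ (({x, y} : Set V)ᶜ),
      (G.induce (({x, y} : Set V)ᶜ)).connectedComponentMk ⟨b, h⟩ = C}.ncard = 2 := by
  constructor
  · exact aux G h2 hcubic ({x, y} : Set V) rfl P hP hsep hmin C hint hC
  · refine aux G h2 hcubic ({x, y} : Set V) (Set.pair_comm x y) P.reverse hP.reverse hsep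
      (fun x' y' Q hQ hs => by rw [Walk.length_reverse]; exact hmin x' y' Q hQ hs) C ?_ ?_
    · obtain ⟨v, hv, hvx, hvy⟩ := hint
      exact ⟨v, by rw [Walk.support_reverse, List.mem_reverse]; exact hv, hvy, hvx⟩
    · intro v hv h
      exact hC v (by rwa [Walk.support_reverse, List.mem_reverse] at hv) h
end

section
/- Let G be a 2-connected cubic graph, and let P be a shortest path whose endvertices x, y separate G. Then there exist three pairwise internally disjoint x–y paths in G. -/
open SimpleGraph

/-- Two `x`–`y` paths are internally disjoint if they share no vertex besides `x` and `y`. -/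
def InternallyDisjoint {V : Type*} {G : SimpleGraph V} {x y : V}
    (P Q : G.Walk x y) : Prop :=
  ∀ v : V, v ∈ P.support → v ∈ Q.support → v = x ∨ v = y

namespace Aux

variable {V : Type*} {G H : SimpleGraph V}

/-- Walk avoiding a vertex set. -/
def AReach (G : SimpleGraph V) (T : Set V) (u v : V) : Prop :=
  ∃ W : G.Walk u v, ∀ a ∈ W.support, a ∉ T

lemma AReach.symm {T : Set V} {u v : V} (h : AReach G T u v) : AReach G T v u := by
  obtain ⟨W, hW⟩ := h
  exact ⟨W.reverse, by simpa [Walk.support_reverse] using hW⟩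

lemma AReach.trans {T : Set V} {u v w : V} (h1 : AReach G T u v) (h2 : AReach G T v w) :
    AReach G T u w := by
  obtain ⟨W1, hW1⟩ := h1
  obtain ⟨W2, hW2⟩ := h2
  refine ⟨W1.append W2, ?_⟩
  intro a ha
  rcases (Walk.mem_support_append_iff _ _).1 ha with h | h
  · exact hW1 a h
  · exact hW2 a h

lemma walk_toInduce {s : Set V} :
    ∀ {u v : V} (W : G.Walk u v), (∀ a ∈ W.support, a ∈ s) →
      ∀ (hu : u ∈ s) (hv : v ∈ s), (G.induce s).Reachable ⟨u, hu⟩ ⟨v, hv⟩ := by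
  intro u v W
  induction W with
  | nil => intro _ hu hv; rfl
  | @cons a b c h W ih =>
    intro hsup hu hv
    have hb : b ∈ s := hsup b (by simp)
    have hadj : (G.induce s).Adj ⟨a, hu⟩ ⟨b, hb⟩ := h
    exact hadj.reachable.trans (ih (fun a ha => hsup a (by simp [ha])) hb hv)

lemma induce_toWalk {s : Set V} :
    ∀ {a b : ↥s} (W : (G.induce s).Walk a b), ∃ W' : G.Walk a.1 b.1, ∀ c ∈ W'.support, c ∈ s := by
  intro a b W
  induction W with
  | nil =>
    refine ⟨Walk.nil, ?_⟩
    intro c hc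
    simp only [Walk.support_nil, List.mem_singleton] at hc
    exact hc ▸ Subtype.coe_prop _
  | @cons a b c h W ih =>
    obtain ⟨W', hW'⟩ := ih
    refine ⟨Walk.cons h W', ?_⟩
    intro d hd
    rcases List.mem_cons.1 (show d ∈ (a : V) :: W'.support from hd) with h1 | h1
    · exact h1 ▸ Subtype.coe_prop _
    · exact hW' d h1

lemma reach_of_not_sep {S : Set V} (h : ¬ Separates G S) {u v : V}
    (hu : u ∉ S) (hv : v ∉ S) : AReach G S u v := by
  have hpre : (G.induce (Sᶜ : Set V)).Preconnected := not_not.1 h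
  obtain ⟨W', hW'⟩ := induce_toWalk (s := (Sᶜ : Set V)) ((hpre ⟨u, hu⟩ ⟨v, hv⟩).some)
  exact ⟨W', hW'⟩

lemma sep_of_not_reach {S : Set V} {u v : V} (hu : u ∉ S) (hv : v ∉ S)
    (h : ¬ AReach G S u v) : Separates G S := by
  intro hpre
  obtain ⟨W', hW'⟩ := induce_toWalk (s := (Sᶜ : Set V)) ((hpre ⟨u, hu⟩ ⟨v, hv⟩).some)
  exact h ⟨W', hW'⟩

/-- every vertex on a walk is the final vertex or has a neighbour -/
lemma adj_or_end : ∀ {u c : V} (W : G.Walk u c), ∀ a ∈ W.support, a = c ∨ ∃ t, G.Adj a t := by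
  intro u c W
  induction W with
  | nil => intro a ha; left; simpa using ha
  | @cons a b c h W ih =>
    intro d hd
    rcases List.mem_cons.1 (by simpa using hd) with h1 | h1
    · exact Or.inr ⟨b, h1 ▸ h⟩
    · exact ih d h1

lemma adj_of_mem_support {u c : V} (W : G.Walk u c) (hne : u ≠ c) {a : V}
    (ha : a ∈ W.support) : ∃ t, G.Adj a t := by
  rcases adj_or_end W a ha with h1 | h1
  · rcases adj_or_end W.reverse a (by simpa using ha) with h2 | h2
    · exact absurd (h2.symm.trans h1) hne
    · exact h2
  · exact h1

/-- the end of a path does not appear in a proper prefix -/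
lemma end_not_mem_takeUntil [DecidableEq V] {u v a : V} {p : G.Walk u v} (hp : p.IsPath)
    (ha : a ∈ p.support) (hne : a ≠ v) : v ∉ (p.takeUntil a ha).support := by
  intro hmem
  have hsup : p.support = (p.takeUntil a ha).support ++ (p.dropUntil a ha).support.tail := by
    rw [← Walk.support_append, p.take_spec ha]
  have hnd := (Walk.isPath_def _).1 hp
  rw [hsup] at hnd
  have hdisj := (List.nodup_append.1 hnd).2.2
  have hv2 : v ∈ (p.dropUntil a ha).support.tail := by
    have hv : v ∈ (p.dropUntil a ha).support := Walk.end_mem_support _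
    rw [Walk.support_eq_cons (p.dropUntil a ha)] at hv
    rcases List.mem_cons.1 hv with h1 | h1
    · exact absurd h1.symm hne
    · exact h1
  exact hdisj v hmem v hv2 rfl

/-- the start of a path does not appear in a proper suffix -/
lemma start_not_mem_dropUntil [DecidableEq V] {u v a : V} {p : G.Walk u v} (hp : p.IsPath)
    (ha : a ∈ p.support) (hne : a ≠ u) : u ∉ (p.dropUntil a ha).support := by
  intro hmem
  have hsup : p.support = (p.takeUntil a ha).support ++ (p.dropUntil a ha).support.tail := by
    rw [← Walk.support_append, p.take_spec ha]
  have hnd := (Walk.isPath_def _).1 hp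
  rw [hsup] at hnd
  have hdisj := (List.nodup_append.1 hnd).2.2
  have hu2 : u ∈ (p.dropUntil a ha).support.tail := by
    rw [Walk.support_eq_cons (p.dropUntil a ha)] at hmem
    rcases List.mem_cons.1 hmem with h1 | h1
    · exact absurd h1.symm hne
    · exact h1
  exact hdisj u (Walk.start_mem_support _) u hu2 rfl

/-- first hit of a two-element set along a walk -/
lemma first_hit_pair {s₁ s₂ : V} :
    ∀ {u c : V} (W : G.Walk u c), (s₁ ∈ W.support ∨ s₂ ∈ W.support) →
      ∃ t, (t = s₁ ∨ t = s₂) ∧ ∃ W₁ : G.Walk u t, (∀ a ∈ W₁.support, a ∈ W.support) ∧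
        (∀ a ∈ W₁.support, a ≠ t → (a ≠ s₁ ∧ a ≠ s₂)) := by
  intro u c W
  induction W with
  | nil =>
    intro hmem
    rename_i u'
    have h' : s₁ = u' ∨ s₂ = u' := by simpa using hmem
    rcases h' with h | h
    · subst h
      exact ⟨s₁, Or.inl rfl, Walk.nil, by simp, fun a ha hne => absurd (by simpa using ha) hne⟩
    · subst h
      exact ⟨s₂, Or.inr rfl, Walk.nil, by simp, fun a ha hne => absurd (by simpa using ha) hne⟩
  | @cons a b c h W ih =>
    intro hmem
    by_cases ha1 : a = s₁
    · exact ⟨a, Or.inl ha1, Walk.nil, by simp, fun d hd hne => absurd (by simpa using hd) hne⟩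
    by_cases ha2 : a = s₂
    · exact ⟨a, Or.inr ha2, Walk.nil, by simp, fun d hd hne => absurd (by simpa using hd) hne⟩
    have hmem' : s₁ ∈ W.support ∨ s₂ ∈ W.support := by
      rcases hmem with h1 | h1
      · left
        rcases List.mem_cons.1 (by simpa using h1) with h2 | h2
        · exact absurd h2.symm ha1
        · exact h2
      · right
        rcases List.mem_cons.1 (by simpa using h1) with h2 | h2
        · exact absurd h2.symm ha2
        · exact h2
    obtain ⟨t, ht, W₁, hsub, havoid⟩ := ih hmem'
    refine ⟨t, ht, Walk.cons h W₁, ?_, ?_⟩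
    · intro d hd
      rcases List.mem_cons.1 (by simpa using hd) with h1 | h1
      · simp [h1]
      · simp [hsub d h1]
    · intro d hd hdt
      rcases List.mem_cons.1 (by simpa using hd) with h1 | h1
      · exact ⟨h1 ▸ ha1, h1 ▸ ha2⟩
      · exact havoid d h1 hdt

/-- support is contained in any set containing the start and closed under the walk's edges -/
lemma support_subset_of_edges {S : Set V} :
    ∀ {u c : V} (W : G.Walk u c), (∀ e ∈ W.edges, ∀ a ∈ e, a ∈ S) → u ∈ S →
      ∀ a ∈ W.support, a ∈ S := by
  intro u c W
  induction W with
  | nil =>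
    intro _ hu a ha
    simp only [Walk.support_nil, List.mem_singleton] at ha
    exact ha ▸ hu
  | @cons a b c h W ih =>
    intro hedges hu d hd
    rcases List.mem_cons.1 (by simpa using hd) with h1 | h1
    · exact h1 ▸ hu
    · refine ih (fun e he a hae => hedges e (by simp [he]) a hae) ?_ d h1
      exact hedges s(a, b) (by simp) b (by simp)

lemma edge_vert_mem_support {u c : V} (W : G.Walk u c) {e : Sym2 V} (he : e ∈ W.edges) :
    ∀ a ∈ e, a ∈ W.support := by
  induction e using Sym2.ind with
  | _ p q =>
    intro a ha
    rcases Sym2.mem_iff.1 ha with h | h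
    · exact h ▸ W.fst_mem_support_of_mem_edges he
    · exact h ▸ W.snd_mem_support_of_mem_edges he

/-- appending two paths that share only the junction vertex -/
lemma append_isPath {u m v : V} {p : G.Walk u m} {q : G.Walk m v} (hp : p.IsPath)
    (hq : q.IsPath) (hinter : ∀ a, a ∈ p.support → a ∈ q.support → a = m) :
    (p.append q).IsPath := by
  rw [Walk.isPath_def, Walk.support_append]
  refine List.Nodup.append ((Walk.isPath_def _).1 hp) (((Walk.isPath_def _).1 hq).tail) ?_
  intro a hap haq
  have haq' : a ∈ q.support := List.mem_of_mem_tail haq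
  have ham : a = m := hinter a hap haq'
  subst ham
  have hnd := (Walk.isPath_def _).1 hq
  rw [Walk.support_eq_cons q] at hnd
  exact (List.nodup_cons.1 hnd).1 haq

section Menger

variable {V : Type*}

lemma support_finite {H : SimpleGraph V} (h : H.edgeSet.Finite) : H.support.Finite := by
  have hsub : H.support ⊆ ⋃ e ∈ H.edgeSet, {a | a ∈ e} := by
    intro v hv
    obtain ⟨w, hw⟩ := (SimpleGraph.mem_support H).1 hv
    exact Set.mem_biUnion ((SimpleGraph.mem_edgeSet H).2 hw) (by simp)
  refine Set.Finite.subset (Set.Finite.biUnion h ?_) hsub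
  intro e _
  induction e using Sym2.ind with
  | _ p q =>
    have : {a | a ∈ s(p, q)} = ({p, q} : Set V) := by
      ext a; simp [Sym2.mem_iff]
    rw [this]
    exact (Set.finite_singleton _).insert _

noncomputable def mu (H : SimpleGraph V) : ℕ := H.support.ncard ^ 3 + H.edgeSet.ncard

/-- two internally disjoint paths -/
def MCon (H : SimpleGraph V) (x y : V) : Prop :=
  ∃ P Q : H.Walk x y, P.IsPath ∧ Q.IsPath ∧ InternallyDisjoint P Q

variable {H : SimpleGraph V}

lemma mem_graph_support {x y : V} (W : H.Walk x y) (hxy : x ≠ y) {a : V}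
    (ha : a ∈ W.support) : a ∈ H.support := by
  obtain ⟨t, ht⟩ := adj_of_mem_support W hxy ha
  exact (SimpleGraph.mem_support H).2 ⟨t, ht⟩

lemma fan_half {n : ℕ}
    (IH : ∀ (H' : SimpleGraph V) (x' y' : V), H'.edgeSet.Finite → mu H' < n →
      x' ≠ y' → ¬ H'.Adj x' y' → H'.Reachable x' y' →
      (∀ z, z ≠ x' → z ≠ y' → ∃ W : H'.Walk x' y', W.IsPath ∧ z ∉ W.support) → MCon H' x' y')
    {H : SimpleGraph V} {x y : V} (hfin : H.edgeSet.Finite) (hmu : mu H ≤ n)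
    (hxy : x ≠ y) (hna : ¬ H.Adj x y) (hreach : H.Reachable x y)
    (havoid : ∀ z, z ≠ x → z ≠ y → ∃ W : H.Walk x y, W.IsPath ∧ z ∉ W.support)
    {s₁ s₂ : V} (h12 : s₁ ≠ s₂) (hs1x : s₁ ≠ x) (hs1y : s₁ ≠ y) (hs2x : s₂ ≠ x) (hs2y : s₂ ≠ y)
    (hcut : ∀ W : H.Walk x y, W.IsPath → s₁ ∈ W.support ∨ s₂ ∈ W.support)
    (hs1sup : s₁ ∈ H.support) (hs2sup : s₂ ∈ H.support)
    (hY : ∃ v, v ≠ y ∧ v ∉ ({s₁, s₂} : Set V) ∧ AReach H {s₁, s₂} y v) :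
    ∃ (F₁ : H.Walk x s₁) (F₂ : H.Walk x s₂), F₁.IsPath ∧ F₂.IsPath ∧
      (∀ a ∈ F₁.support, a = s₁ ∨ (a ∉ ({s₁, s₂} : Set V) ∧ AReach H {s₁, s₂} x a)) ∧
      (∀ a ∈ F₂.support, a = s₂ ∨ (a ∉ ({s₁, s₂} : Set V) ∧ AReach H {s₁, s₂} x a)) ∧
      (∀ a, a ∈ F₁.support → a ∈ F₂.support → a = x) := by
  classical
  set T : Set V := {s₁, s₂} with hT
  have hxT : x ∉ T := by simp [hT, hs1x.symm, hs2x.symm]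
  have hyT : y ∉ T := by simp [hT, hs1y.symm, hs2y.symm]
  -- no x-y path avoids T
  have hnoavoid : ∀ (W : H.Walk x y), ¬ (∀ a ∈ W.support, a ∉ T) := by
    intro W hW
    have hb := hcut W.bypass W.bypass_isPath
    rcases hb with h1 | h1
    · exact hW s₁ (W.support_bypass_subset h1) (by simp [hT])
    · exact hW s₂ (W.support_bypass_subset h1) (by simp [hT])
  have hynX : ¬ AReach H T x y := fun ⟨W, hW⟩ => hnoavoid W hW
  set X : Set V := {v | v ∉ T ∧ AReach H T x v} with hX
  set Y : Set V := {v | v ∉ T ∧ AReach H T y v} with hYdef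
  have hxX : x ∈ X := ⟨hxT, Walk.nil, by intro a ha; simp at ha; exact ha ▸ hxT⟩
  have hXY : ∀ a, a ∈ X → a ∈ Y → False := by
    rintro a ⟨_, hxa⟩ ⟨_, hya⟩
    exact hynX (hxa.trans hya.symm)
  set Ein : Set (Sym2 V) := {e | e ∈ H.edgeSet ∧ ∀ a ∈ e, a ∈ X ∪ T} with hEin
  set Hx : SimpleGraph V := SimpleGraph.fromEdgeSet (Ein ∪ {s(y, s₁), s(y, s₂)}) with hHx
  have hEfin : Hx.edgeSet.Finite := by
    rw [hHx, SimpleGraph.edgeSet_fromEdgeSet]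
    refine Set.Finite.subset (Set.Finite.union (hfin.subset ?_) ?_) Set.diff_subset
    · exact fun e he => he.1
    · exact (Set.finite_singleton _).insert _
  have hadjx : ∀ {a b : V}, Hx.Adj a b ↔
      ((s(a,b) ∈ Ein ∨ s(a,b) = s(y,s₁) ∨ s(a,b) = s(y,s₂)) ∧ a ≠ b) := by
    intro a b
    rw [hHx, SimpleGraph.fromEdgeSet_adj]
    constructor
    · rintro ⟨h1, h2⟩
      rcases h1 with h1 | h1
      · exact ⟨Or.inl h1, h2⟩
      · rcases h1 with h1 | h1
        · exact ⟨Or.inr (Or.inl h1), h2⟩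
        · exact ⟨Or.inr (Or.inr h1), h2⟩
    · rintro ⟨h1, h2⟩
      refine ⟨?_, h2⟩
      rcases h1 with h1 | h1 | h1
      · exact Or.inl h1
      · exact Or.inr (by simp [h1])
      · exact Or.inr (by simp [h1])
  have hyNbr : ∀ t, Hx.Adj y t → t = s₁ ∨ t = s₂ := by
    intro t ht
    rcases (hadjx.1 ht).1 with h1 | h1 | h1
    · exfalso
      have hy : y ∈ X ∪ T := h1.2 y (by simp)
      rcases hy with hy | hy
      · exact hynX hy.2
      · exact hyT hy
    · rcases Sym2.eq_iff.1 h1 with ⟨_, h⟩ | ⟨h, _⟩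
      · exact Or.inl h
      · exact absurd h hs1y.symm
    · rcases Sym2.eq_iff.1 h1 with ⟨_, h⟩ | ⟨h, _⟩
      · exact Or.inr h
      · exact absurd h hs2y.symm
  -- builder: from an H-path x..y, get an Hx-path x..y inside its support (plus y)
  have build : ∀ (W : H.Walk x y), W.IsPath →
      ∃ W₁ : Hx.Walk x y, W₁.IsPath ∧ ∀ a ∈ W₁.support, a ∈ W.support := by
    intro W hWp
    obtain ⟨t, ht, W₁, hsub, hav⟩ := first_hit_pair W (hcut W hWp)
    set P₁ := W₁.bypass with hP₁
    have hP₁p : P₁.IsPath := W₁.bypass_isPath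
    have hP₁sub : ∀ a ∈ P₁.support, a ∈ W.support :=
      fun a ha => hsub a (W₁.support_bypass_subset ha)
    have hP₁av : ∀ a ∈ P₁.support, a ≠ t → a ∉ T :=
      fun a ha hat => by
        have := hav a (W₁.support_bypass_subset ha) hat
        simp [hT, this.1, this.2]
    have htT : t ∈ T := by rcases ht with h | h <;> simp [hT, h]
    -- every vertex of P₁ is in X ∪ T
    have hP₁X : ∀ a ∈ P₁.support, a ∈ X ∪ T := by
      intro a ha
      by_cases hat : a = t
      · exact Or.inr (hat ▸ htT)
      · refine Or.inl ⟨hP₁av a ha hat, ?_⟩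
        refine ⟨P₁.takeUntil a ha, ?_⟩
        intro b hb
        have hbP : b ∈ P₁.support := (P₁.support_takeUntil_subset ha) hb
        have hbt : b ≠ t := by
          intro hbt
          subst hbt
          exact end_not_mem_takeUntil hP₁p ha hat hb
        exact hP₁av b hbP hbt
    have hedges : ∀ e ∈ P₁.edges, e ∈ Hx.edgeSet := by
      intro e he
      rw [hHx, SimpleGraph.edgeSet_fromEdgeSet]
      refine ⟨Or.inl ⟨P₁.edges_subset_edgeSet he, ?_⟩, H.not_isDiag_of_mem_edgeSet (P₁.edges_subset_edgeSet he)⟩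
      intro a hae
      exact hP₁X a (edge_vert_mem_support P₁ he a hae)
    have hytP : t = s₁ ∨ t = s₂ := ht
    have htadj : Hx.Adj t y := by
      refine hadjx.2 ⟨?_, by rcases hytP with h | h <;> (subst h; first | exact hs1y | exact hs2y)⟩
      rcases hytP with h | h
      · subst h; exact Or.inr (Or.inl (Sym2.eq_swap))
      · subst h; exact Or.inr (Or.inr (Sym2.eq_swap))
    set P₁x := P₁.transfer Hx hedges with hP₁x
    have hyP₁ : y ∉ P₁.support := by
      intro hy
      by_cases hyt : y = t
      · exact hyT (hyt ▸ htT)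
      · rcases hP₁X y hy with h | h
        · exact hynX h.2
        · exact hyT h
    refine ⟨P₁x.append (Walk.cons htadj Walk.nil), ?_, ?_⟩
    · refine append_isPath (hP₁p.transfer hedges) ?_ ?_
      · rw [Walk.cons_isPath_iff]
        refine ⟨Walk.IsPath.nil, by simp [(by rcases hytP with h | h <;> (subst h; first | exact hs1y.symm | exact hs2y.symm) : y ≠ t).symm]⟩
      · intro a ha hb
        rw [Walk.support_transfer] at ha
        simp only [Walk.support_cons, Walk.support_nil, List.mem_cons, List.mem_singleton] at hb
        rcases hb with hb | hb
        · exact hb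
        · simp at hb
          exact absurd (hb ▸ ha) hyP₁
    · intro a ha
      rw [Walk.mem_support_append_iff] at ha
      rcases ha with ha | ha
      · rw [Walk.support_transfer] at ha
        exact hP₁sub a ha
      · simp only [Walk.support_cons, Walk.support_nil, List.mem_cons, List.mem_singleton] at ha
        rcases ha with ha | ha
        · rw [ha]
          exact hP₁sub t (Walk.end_mem_support P₁)
        · simp at ha
          exact ha ▸ W.end_mem_support
  -- hypotheses of IH for Hx
  have hreachW : ∃ W : H.Walk x y, W.IsPath := ⟨hreach.some.bypass, Walk.bypass_isPath _⟩
  obtain ⟨W0, hW0⟩ := hreachW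
  obtain ⟨W0x, hW0xp, _⟩ := build W0 hW0
  have hreachx : Hx.Reachable x y := ⟨W0x⟩
  have hnax : ¬ Hx.Adj x y := by
    intro h
    rcases (hadjx.1 h).1 with h1 | h1 | h1
    · exact hna (h1.1)
    · rcases Sym2.eq_iff.1 h1 with ⟨h2, _⟩ | ⟨h2, _⟩
      · exact hxy h2
      · exact hs1x h2.symm
    · rcases Sym2.eq_iff.1 h1 with ⟨h2, _⟩ | ⟨h2, _⟩
      · exact hxy h2
      · exact hs2x h2.symm
  have havoidx : ∀ z, z ≠ x → z ≠ y → ∃ W : Hx.Walk x y, W.IsPath ∧ z ∉ W.support := by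
    intro z hzx hzy
    obtain ⟨W, hWp, hWz⟩ := havoid z hzx hzy
    obtain ⟨W₁, hW₁p, hW₁sub⟩ := build W hWp
    exact ⟨W₁, hW₁p, fun hz => hWz (hW₁sub z hz)⟩
  -- measure decrease
  have hHsupfin : H.support.Finite := support_finite hfin
  obtain ⟨v₀, hv₀y, hv₀T, hv₀Y⟩ := hY
  have hv₀sup : v₀ ∈ H.support := by
    obtain ⟨W, hW⟩ := hv₀Y
    exact (SimpleGraph.mem_support H).2 (adj_of_mem_support W (Ne.symm hv₀y) (Walk.end_mem_support W))
  have hysup : y ∈ H.support := by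
    obtain ⟨W⟩ := hreach
    exact (SimpleGraph.mem_support H).2 (adj_of_mem_support W hxy (Walk.end_mem_support W))
  have hxsup : x ∈ H.support := by
    obtain ⟨W⟩ := hreach
    exact (SimpleGraph.mem_support H).2 (adj_of_mem_support W hxy (Walk.start_mem_support W))
  have hsupx : Hx.support ⊆ H.support \ {v₀} := by
    intro v hv
    obtain ⟨w, hw⟩ := (SimpleGraph.mem_support Hx).1 hv
    have hvw := (hadjx.1 hw).1
    have hvsup : v ∈ H.support ∧ v ≠ v₀ := by
      rcases hvw with h1 | h1 | h1
      · have hvin : v ∈ X ∪ T := h1.2 v (by simp)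
        have : H.Adj v w := (SimpleGraph.mem_edgeSet H).1 h1.1
        refine ⟨(SimpleGraph.mem_support H).2 ⟨w, this⟩, ?_⟩
        intro hvv
        subst hvv
        rcases hvin with h2 | h2
        · exact hXY v h2 ⟨hv₀T, hv₀Y⟩
        · exact hv₀T h2
      · rcases Sym2.eq_iff.1 h1 with ⟨h2, _⟩ | ⟨h2, _⟩
        · subst h2; exact ⟨hysup, Ne.symm hv₀y⟩
        · subst h2; exact ⟨hs1sup, fun hh => hv₀T (by simp [hT, ← hh])⟩
      · rcases Sym2.eq_iff.1 h1 with ⟨h2, _⟩ | ⟨h2, _⟩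
        · subst h2; exact ⟨hysup, Ne.symm hv₀y⟩
        · subst h2; exact ⟨hs2sup, fun hh => hv₀T (by simp [hT, ← hh])⟩
    exact ⟨hvsup.1, by simpa using hvsup.2⟩
  have hEx : Hx.edgeSet.ncard ≤ H.edgeSet.ncard + 2 := by
    have hsub2 : Hx.edgeSet ⊆ H.edgeSet ∪ {s(y,s₁), s(y,s₂)} := by
      rw [hHx, SimpleGraph.edgeSet_fromEdgeSet]
      intro e he
      rcases he.1 with h1 | h1
      · exact Or.inl h1.1
      · exact Or.inr h1
    calc Hx.edgeSet.ncard ≤ (H.edgeSet ∪ {s(y,s₁), s(y,s₂)}).ncard :=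
        Set.ncard_le_ncard hsub2 (hfin.union ((Set.finite_singleton _).insert _))
      _ ≤ H.edgeSet.ncard + ({s(y,s₁), s(y,s₂)} : Set (Sym2 V)).ncard := Set.ncard_union_le _ _
      _ ≤ H.edgeSet.ncard + 2 := by
          have h5 := Set.ncard_insert_le (s(y,s₁)) ({s(y,s₂)} : Set (Sym2 V))
          rw [Set.ncard_singleton] at h5
          omega
  have hA2 : 2 ≤ H.support.ncard := by
    have hsub : ({x, y} : Set V) ⊆ H.support := by
      intro v hv
      rcases hv with hv | hv
      · exact hv ▸ hxsup
      · exact (by simpa using hv : v = y) ▸ hysup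
    calc (2:ℕ) = ({x,y} : Set V).ncard := (Set.ncard_pair hxy).symm
      _ ≤ _ := Set.ncard_le_ncard hsub hHsupfin
  have hAx : Hx.support.ncard < H.support.ncard := by
    refine lt_of_le_of_lt (Set.ncard_le_ncard hsupx hHsupfin.diff) ?_
    exact Set.ncard_diff_singleton_lt_of_mem hv₀sup hHsupfin
  have hmux : mu Hx < mu H := by
    have hAx' : Hx.support.ncard ≤ H.support.ncard - 1 := by omega
    have h1 : mu Hx ≤ (H.support.ncard - 1)^3 + (H.edgeSet.ncard + 2) :=
      Nat.add_le_add (Nat.pow_le_pow_left hAx' 3) hEx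
    refine lt_of_le_of_lt h1 ?_
    obtain ⟨b, hb⟩ : ∃ b, H.support.ncard = b + 2 := ⟨H.support.ncard - 2, by omega⟩
    rw [mu, hb]
    have hexp : (b + 2 - 1)^3 = (b+1)^3 := by norm_num
    rw [hexp]
    have : (b+1)^3 + 2 < (b+2)^3 := by nlinarith [sq_nonneg b, Nat.zero_le b]
    omega
  obtain ⟨P₁, P₂, hP₁p, hP₂p, hdisj⟩ :=
    IH Hx x y hEfin (lt_of_lt_of_le hmux hmu) hxy hnax hreachx havoidx
  have extract : ∀ (P : Hx.Walk x y), P.IsPath → ∃ (t : V) (F : H.Walk x t),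
      (t = s₁ ∨ t = s₂) ∧ F.IsPath ∧ (∀ a ∈ F.support, a ∈ P.support) ∧ y ∉ F.support ∧
      (∀ a ∈ F.support, a ∈ X ∪ T) ∧ t ∈ F.support := by
    intro P hPp
    obtain ⟨t, hadj, rest, hPeq⟩ := Walk.exists_eq_cons_of_ne hxy.symm P.reverse
    have hrevp : P.reverse.IsPath := hPp.reverse
    rw [hPeq, Walk.cons_isPath_iff] at hrevp
    obtain ⟨hrestp, hyrest⟩ := hrevp
    have ht : t = s₁ ∨ t = s₂ := hyNbr t hadj
    have htT : t ∈ T := by rcases ht with h | h <;> simp [hT, h]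
    have hrestE : ∀ e ∈ rest.edges, e ∈ Ein := by
      intro e he
      have heHx : e ∈ Hx.edgeSet := rest.edges_subset_edgeSet he
      rw [hHx, SimpleGraph.edgeSet_fromEdgeSet] at heHx
      rcases heHx.1 with h1 | h1
      · exact h1
      · exfalso
        refine hyrest (edge_vert_mem_support rest he y ?_)
        rcases h1 with h1 | h1
        · rw [h1]; simp
        · rw [(by simpa using h1 : e = s(y,s₂))]; simp
    have hrestH : ∀ e ∈ rest.edges, e ∈ H.edgeSet := fun e he => (hrestE e he).1
    refine ⟨t, (rest.transfer H hrestH).reverse, ht, ((hrestp.transfer hrestH).reverse), ?_, ?_, ?_, ?_⟩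
    · intro a ha
      have ha' : a ∈ rest.support := by
        simpa [Walk.support_reverse, Walk.support_transfer] using ha
      have : a ∈ P.reverse.support := by
        rw [hPeq, Walk.support_cons]
        exact List.mem_cons_of_mem _ ha'
      simpa [Walk.support_reverse] using this
    · intro hy
      exact hyrest (by simpa [Walk.support_reverse, Walk.support_transfer] using hy)
    · intro a ha
      have ha' : a ∈ rest.support := by
        simpa [Walk.support_reverse, Walk.support_transfer] using ha
      refine support_subset_of_edges rest ?_ (Or.inr htT) a ha'
      intro e he b hbe
      exact (hrestE e he).2 b hbe
    · simp [Walk.support_reverse, Walk.support_transfer]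
  obtain ⟨t₁, F₁', ht₁, hF₁p, hF₁P, hyF₁, hF₁X, htF₁⟩ := extract P₁ hP₁p
  obtain ⟨t₂, F₂', ht₂, hF₂p, hF₂P, hyF₂, hF₂X, htF₂⟩ := extract P₂ hP₂p
  have hTnxy : ∀ t : V, (t = s₁ ∨ t = s₂) → t ≠ x ∧ t ≠ y := by
    rintro t (rfl | rfl)
    · exact ⟨hs1x, hs1y⟩
    · exact ⟨hs2x, hs2y⟩
  have ht12 : t₁ ≠ t₂ := by
    intro h
    have h1 : t₁ ∈ P₁.support := hF₁P t₁ (Walk.end_mem_support _)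
    have h2 : t₁ ∈ P₂.support := hF₂P t₁ (h ▸ Walk.end_mem_support F₂')
    rcases hdisj t₁ h1 h2 with h3 | h3
    · exact (hTnxy t₁ ht₁).1 h3
    · exact (hTnxy t₁ ht₁).2 h3
  have ht2F₁ : t₂ ∉ F₁'.support := by
    intro hmem
    have h2 : t₂ ∈ P₂.support := hF₂P t₂ (Walk.end_mem_support _)
    rcases hdisj t₂ (hF₁P t₂ hmem) h2 with h3 | h3
    · exact (hTnxy t₂ ht₂).1 h3
    · exact (hTnxy t₂ ht₂).2 h3
  have ht1F₂ : t₁ ∉ F₂'.support := by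
    intro hmem
    have h1 : t₁ ∈ P₁.support := hF₁P t₁ (Walk.end_mem_support _)
    rcases hdisj t₁ h1 (hF₂P t₁ hmem) with h3 | h3
    · exact (hTnxy t₁ ht₁).1 h3
    · exact (hTnxy t₁ ht₁).2 h3
  have hcom : ∀ a, a ∈ F₁'.support → a ∈ F₂'.support → a = x := by
    intro a h1 h2
    rcases hdisj a (hF₁P a h1) (hF₂P a h2) with h | h
    · exact h
    · exact absurd (h ▸ h1) hyF₁
  have hsupcond : ∀ (t' t'' : V) (F : H.Walk x t'), (t' = s₁ ∨ t' = s₂) → t'' ∉ F.support →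
      (∀ a ∈ F.support, a ∈ X ∪ T) → ({s₁, s₂} : Set V) = {t', t''} →
      ∀ a ∈ F.support, a = t' ∨ (a ∉ ({s₁, s₂} : Set V) ∧ AReach H {s₁, s₂} x a) := by
    intro t' t'' F _ ht''F hFX hpair a ha
    rcases hFX a ha with h | h
    · exact Or.inr ⟨h.1, h.2⟩
    · rw [hT, hpair] at h
      rcases h with h | h
      · exact Or.inl h
      · exact absurd ((by simpa using h : a = t'') ▸ ha) ht''F
  rcases ht₁ with rfl1 | rfl1
  · have ht₂' : t₂ = s₂ := by
      rcases ht₂ with h | h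
      · exact absurd (h.trans rfl1.symm) (Ne.symm ht12)
      · exact h
    subst rfl1; subst ht₂'
    refine ⟨F₁', F₂', hF₁p, hF₂p, ?_, ?_, hcom⟩
    · refine hsupcond t₁ t₂ F₁' (Or.inl rfl) ht2F₁ hF₁X (by first | rfl | exact Set.pair_comm _ _)
    · exact hsupcond t₂ t₁ F₂' (Or.inr rfl) ht1F₂ hF₂X (by first | rfl | exact Set.pair_comm _ _)
  · have ht₂' : t₂ = s₁ := by
      rcases ht₂ with h | h
      · exact h
      · exact absurd (h.trans rfl1.symm) (Ne.symm ht12)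
    subst rfl1; subst ht₂'
    refine ⟨F₂', F₁', hF₂p, hF₁p, ?_, ?_, fun a h1 h2 => hcom a h2 h1⟩
    · exact hsupcond t₂ t₁ F₂' (Or.inl rfl) ht1F₂ hF₂X (by first | rfl | exact Set.pair_comm _ _)
    · exact hsupcond t₁ t₂ F₁' (Or.inr rfl) ht2F₁ hF₁X (by first | rfl | exact Set.pair_comm _ _)

theorem menger_aux : ∀ n : ℕ, ∀ (H : SimpleGraph V) (x y : V), H.edgeSet.Finite → mu H ≤ n →
    x ≠ y → ¬ H.Adj x y → H.Reachable x y →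
    (∀ z, z ≠ x → z ≠ y → ∃ W : H.Walk x y, W.IsPath ∧ z ∉ W.support) → MCon H x y := by
  intro n
  induction n using Nat.strong_induction_on with
  | _ n IH =>
  intro H x y hfin hmu hxy hna hreach havoid
  classical
  have IHn : ∀ (H' : SimpleGraph V) (x' y' : V), H'.edgeSet.Finite → mu H' < n →
      x' ≠ y' → ¬ H'.Adj x' y' → H'.Reachable x' y' →
      (∀ z, z ≠ x' → z ≠ y' → ∃ W : H'.Walk x' y', W.IsPath ∧ z ∉ W.support) → MCon H' x' y' :=
    fun H' x' y' hf hlt => IH (mu H') hlt H' x' y' hf le_rfl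
  -- direct two-path construction through a common neighbour
  have hdirect : ∀ z : V, z ≠ x → z ≠ y → H.Adj x z → H.Adj y z → MCon H x y := by
    intro z hzx hzy hxz hyz
    obtain ⟨Q, hQp, hQz⟩ := havoid z hzx hzy
    refine ⟨Walk.cons hxz (Walk.cons hyz.symm Walk.nil), Q, ?_, hQp, ?_⟩
    · rw [Walk.isPath_def]
      simp [hxz.ne, hxy, hzy]
    · intro v h1 h2
      simp only [Walk.support_cons, Walk.support_nil, List.mem_cons, List.mem_singleton] at h1
      rcases h1 with rfl | rfl | h1
      · exact Or.inl rfl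
      · exact absurd h2 hQz
      · simp at h1; exact Or.inr h1
  -- neighbours forced into a 2-cut when the near side is trivial
  have hNbr : ∀ (u : V) (s₁ s₂ : V), s₁ ≠ u → s₂ ≠ u →
      ¬(∃ v, v ≠ u ∧ v ∉ ({s₁, s₂} : Set V) ∧ AReach H {s₁, s₂} u v) →
      ∀ t, H.Adj u t → t = s₁ ∨ t = s₂ := by
    intro u s₁ s₂ h1u h2u hne t hut
    by_contra hc
    push_neg at hc
    refine hne ⟨t, hut.ne', ?_, ?_⟩
    · simp [hc.1, hc.2]
    · refine ⟨Walk.cons hut Walk.nil, ?_⟩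
      intro a ha
      simp only [Walk.support_cons, Walk.support_nil, List.mem_cons, List.mem_singleton] at ha
      rcases ha with rfl | ha
      · simp [Ne.symm h1u, Ne.symm h2u]
      · simp at ha; subst ha; simp [hc.1, hc.2]
  have hsecond : ∀ (u c : V) (Q : H.Walk u c), u ≠ c → ∃ t, H.Adj u t ∧ t ∈ Q.support := by
    intro u c Q huc
    obtain ⟨t, h, Q', hQ'⟩ := Walk.exists_eq_cons_of_ne huc Q
    refine ⟨t, h, ?_⟩
    rw [hQ', Walk.support_cons]
    exact List.mem_cons_of_mem _ (Walk.start_mem_support Q')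
  -- gluing via the two fans
  have glue : ∀ s₁ s₂ : V, s₁ ≠ s₂ → s₁ ≠ x → s₁ ≠ y → s₂ ≠ x → s₂ ≠ y →
      (∀ W : H.Walk x y, W.IsPath → s₁ ∈ W.support ∨ s₂ ∈ W.support) →
      s₁ ∈ H.support → s₂ ∈ H.support →
      (∃ v, v ≠ y ∧ v ∉ ({s₁, s₂} : Set V) ∧ AReach H {s₁, s₂} y v) →
      (∃ v, v ≠ x ∧ v ∉ ({s₁, s₂} : Set V) ∧ AReach H {s₁, s₂} x v) →
      MCon H x y := by
    intro s₁ s₂ h12 h1x h1y h2x h2y hcut h1sup h2sup hYne hXne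
    obtain ⟨F₁, F₂, hF₁p, hF₂p, hF₁s, hF₂s, hFcom⟩ :=
      fan_half IHn hfin hmu hxy hna hreach havoid h12 h1x h1y h2x h2y hcut h1sup h2sup hYne
    have hcut' : ∀ W : H.Walk y x, W.IsPath → s₁ ∈ W.support ∨ s₂ ∈ W.support := by
      intro W hW
      have := hcut W.reverse hW.reverse
      simpa [Walk.support_reverse] using this
    have havoid' : ∀ z, z ≠ y → z ≠ x → ∃ W : H.Walk y x, W.IsPath ∧ z ∉ W.support := by
      intro z hzy hzx
      obtain ⟨W, hWp, hWz⟩ := havoid z hzx hzy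
      exact ⟨W.reverse, hWp.reverse, by simpa [Walk.support_reverse] using hWz⟩
    obtain ⟨B₁, B₂, hB₁p, hB₂p, hB₁s, hB₂s, hBcom⟩ :=
      fan_half IHn hfin hmu hxy.symm (fun h => hna h.symm) hreach.symm havoid'
        h12 h1y h1x h2y h2x hcut' h1sup h2sup hXne
    -- no vertex avoids the cut from both sides
    have hXYcon : ∀ a, (a ∉ ({s₁, s₂} : Set V) ∧ AReach H {s₁, s₂} x a) →
        (a ∉ ({s₁, s₂} : Set V) ∧ AReach H {s₁, s₂} y a) → False := by
      rintro a ⟨_, hxa⟩ ⟨_, hya⟩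
      obtain ⟨W, hW⟩ := hxa.trans hya.symm
      rcases hcut W.bypass W.bypass_isPath with h | h
      · exact hW s₁ (W.support_bypass_subset h) (by simp)
      · exact hW s₂ (W.support_bypass_subset h) (by simp)
    have hP1 : (F₁.append B₁.reverse).IsPath := by
      refine append_isPath hF₁p hB₁p.reverse ?_
      intro a h1 h2
      rw [Walk.support_reverse, List.mem_reverse] at h2
      rcases hF₁s a h1 with h3 | h3
      · exact h3
      · rcases hB₁s a h2 with h4 | h4
        · exact h4
        · exact (hXYcon a h3 h4).elim
    have hP2 : (F₂.append B₂.reverse).IsPath := by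
      refine append_isPath hF₂p hB₂p.reverse ?_
      intro a h1 h2
      rw [Walk.support_reverse, List.mem_reverse] at h2
      rcases hF₂s a h1 with h3 | h3
      · exact h3
      · rcases hB₂s a h2 with h4 | h4
        · exact h4
        · exact (hXYcon a h3 h4).elim
    refine ⟨F₁.append B₁.reverse, F₂.append B₂.reverse, hP1, hP2, ?_⟩
    intro v hv1 hv2
    rw [Walk.mem_support_append_iff] at hv1 hv2
    have hB1mem : v ∈ B₁.reverse.support → v ∈ B₁.support := by
      intro h; rwa [Walk.support_reverse, List.mem_reverse] at h
    have hB2mem : v ∈ B₂.reverse.support → v ∈ B₂.support := by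
      intro h; rwa [Walk.support_reverse, List.mem_reverse] at h
    rcases hv1 with h1 | h1 <;> rcases hv2 with h2 | h2
    · exact Or.inl (hFcom v h1 h2)
    · -- v ∈ F₁, v ∈ B₂
      exfalso
      rcases hF₁s v h1 with h3 | h3 <;> rcases hB₂s v (hB2mem h2) with h4 | h4
      · exact h12 (h3 ▸ h4 ▸ rfl)
      · exact h4.1 (by simp [h3])
      · exact h3.1 (by simp [h4])
      · exact hXYcon v h3 h4
    · exfalso
      rcases hB₁s v (hB1mem h1) with h3 | h3 <;> rcases hF₂s v h2 with h4 | h4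
      · exact h12 (h3 ▸ h4 ▸ rfl)
      · exact h4.1 (by simp [h3])
      · exact h3.1 (by simp [h4])
      · exact hXYcon v h4 h3
    · exact Or.inr (hBcom v (hB1mem h1) (hB2mem h2))
  -- get a path and its first two edges
  obtain ⟨R0⟩ := hreach
  have hRp : R0.bypass.IsPath := R0.bypass_isPath
  obtain ⟨w, hxw, R₁, hR1⟩ := Walk.exists_eq_cons_of_ne hxy R0.bypass
  have hwx : w ≠ x := hxw.ne'
  have hwy : w ≠ y := by
    intro h
    exact hna (h ▸ hxw)
  obtain ⟨w₂, hww₂, R₂, hR2⟩ := Walk.exists_eq_cons_of_ne hwy R₁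
  have hR1p : R₁.IsPath ∧ x ∉ R₁.support := by
    rw [hR1, Walk.cons_isPath_iff] at hRp
    exact hRp
  have hw₂x : w₂ ≠ x := by
    intro h
    refine hR1p.2 ?_
    rw [hR2, Walk.support_cons]
    exact h ▸ List.mem_cons_of_mem _ (Walk.start_mem_support R₂)
  have hw₂w : w₂ ≠ w := hww₂.ne'
  by_cases hw2y : w₂ = y
  · exact hdirect w hwx hwy hxw ((hw2y ▸ hww₂).symm)
  -- delete the interior edge s(w, w₂)
  set e : Sym2 V := s(w, w₂) with he
  set H' : SimpleGraph V := H.deleteEdges {e} with hH'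
  have hH'le : H' ≤ H := SimpleGraph.deleteEdges_le _
  have hH'edge : H'.edgeSet = H.edgeSet \ {e} := SimpleGraph.edgeSet_deleteEdges _
  have hfin' : H'.edgeSet.Finite := by rw [hH'edge]; exact hfin.subset Set.diff_subset
  have hedges' : ∀ (W : H.Walk x y), e ∉ W.edges → ∀ e' ∈ W.edges, e' ∈ H'.edgeSet := by
    intro W hnc e' he'
    rw [hH'edge]
    refine ⟨W.edges_subset_edgeSet he', ?_⟩
    intro h
    simp only [Set.mem_singleton_iff] at h
    exact hnc (h ▸ he')
  have hnoe : ∀ (W : H.Walk x y), w ∉ W.support ∨ w₂ ∉ W.support → e ∉ W.edges := by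
    intro W hw hmem
    rcases hw with hw | hw
    · exact hw (W.fst_mem_support_of_mem_edges (by rw [← he]; exact hmem))
    · exact hw (W.snd_mem_support_of_mem_edges (by rw [← he]; exact hmem))
  have hreach' : H'.Reachable x y := by
    obtain ⟨W, hWp, hWw⟩ := havoid w hwx hwy
    exact ⟨W.transfer H' (hedges' W (hnoe W (Or.inl hWw)))⟩
  by_cases hall : ∀ z, z ≠ x → z ≠ y → ∃ W : H'.Walk x y, W.IsPath ∧ z ∉ W.support
  · -- recurse on H - e
    have hmulow : mu H' < mu H := by
      have hA : H'.support ⊆ H.support := by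
        intro v hv
        obtain ⟨t, ht⟩ := (SimpleGraph.mem_support H').1 hv
        exact (SimpleGraph.mem_support H).2 ⟨t, hH'le ht⟩
      have hEss : H'.edgeSet ⊂ H.edgeSet := by
        rw [hH'edge]
        refine ⟨Set.diff_subset, ?_⟩
        intro hsub
        have : e ∈ H.edgeSet := (SimpleGraph.mem_edgeSet H).2 hww₂
        exact (hsub this).2 rfl
      exact Nat.add_lt_add_of_le_of_lt
        (Nat.pow_le_pow_left (Set.ncard_le_ncard hA (support_finite hfin)) 3)
        (Set.ncard_lt_ncard hEss hfin)
    obtain ⟨P₁, P₂, hP₁p, hP₂p, hdisj⟩ :=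
      IHn H' x y hfin' (lt_of_lt_of_le hmulow hmu) hxy
        (fun h => hna (hH'le h)) hreach' hall
    have hsubE : ∀ (W : H'.Walk x y), ∀ e' ∈ W.edges, e' ∈ H.edgeSet := by
      intro W e' he'
      have := W.edges_subset_edgeSet he'
      rw [hH'edge] at this
      exact this.1
    refine ⟨P₁.transfer H (hsubE P₁), P₂.transfer H (hsubE P₂),
      hP₁p.transfer _, hP₂p.transfer _, ?_⟩
    intro v h1 h2
    rw [Walk.support_transfer] at h1 h2
    exact hdisj v h1 h2
  · -- a cut vertex z₀ for H - e
    push_neg at hall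
    obtain ⟨z₀, hz₀x, hz₀y, hz₀hit'⟩ := hall
    have hz₀hit : ∀ W : H'.Walk x y, W.IsPath → z₀ ∈ W.support := hz₀hit'
    -- z₀ differs from w and w₂
    have hz₀w : z₀ ≠ w := by
      obtain ⟨W, hWp, hWw⟩ := havoid w hwx hwy
      have := hz₀hit (W.transfer H' (hedges' W (hnoe W (Or.inl hWw))))
        (hWp.transfer _)
      rw [Walk.support_transfer] at this
      intro h
      exact hWw (h ▸ this)
    have hz₀w₂ : z₀ ≠ w₂ := by
      obtain ⟨W, hWp, hWw⟩ := havoid w₂ hw₂x hw2y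
      have := hz₀hit (W.transfer H' (hedges' W (hnoe W (Or.inr hWw))))
        (hWp.transfer _)
      rw [Walk.support_transfer] at this
      intro h
      exact hWw (h ▸ this)
    have hz₀sup : z₀ ∈ H.support := by
      obtain ⟨W, hWp, hWw⟩ := havoid w hwx hwy
      have hmem := hz₀hit (W.transfer H' (hedges' W (hnoe W (Or.inl hWw)))) (hWp.transfer _)
      rw [Walk.support_transfer] at hmem
      exact (SimpleGraph.mem_support H).2 (adj_of_mem_support W hxy hmem)
    have hwsup : w ∈ H.support := (SimpleGraph.mem_support H).2 ⟨x, hxw.symm⟩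
    have hw₂sup : w₂ ∈ H.support := (SimpleGraph.mem_support H).2 ⟨w, hww₂.symm⟩
    -- the two cuts
    have hcut1 : ∀ W : H.Walk x y, W.IsPath → z₀ ∈ W.support ∨ w ∈ W.support := by
      intro W hW
      by_cases hw : w ∈ W.support
      · exact Or.inr hw
      · left
        have := hz₀hit (W.transfer H' (hedges' W (hnoe W (Or.inl hw)))) (hW.transfer _)
        rwa [Walk.support_transfer] at this
    have hcut2 : ∀ W : H.Walk x y, W.IsPath → z₀ ∈ W.support ∨ w₂ ∈ W.support := by
      intro W hW
      by_cases hw : w₂ ∈ W.support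
      · exact Or.inr hw
      · left
        have := hz₀hit (W.transfer H' (hedges' W (hnoe W (Or.inr hw)))) (hW.transfer _)
        rwa [Walk.support_transfer] at this
    by_cases hglue1 : (∃ v, v ≠ y ∧ v ∉ ({z₀, w} : Set V) ∧ AReach H {z₀, w} y v) ∧
        (∃ v, v ≠ x ∧ v ∉ ({z₀, w} : Set V) ∧ AReach H {z₀, w} x v)
    · exact glue z₀ w hz₀w hz₀x hz₀y hwx hwy hcut1 hz₀sup hwsup hglue1.1 hglue1.2
    by_cases hglue2 : (∃ v, v ≠ y ∧ v ∉ ({z₀, w₂} : Set V) ∧ AReach H {z₀, w₂} y v) ∧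
        (∃ v, v ≠ x ∧ v ∉ ({z₀, w₂} : Set V) ∧ AReach H {z₀, w₂} x v)
    · exact glue z₀ w₂ hz₀w₂ hz₀x hz₀y hw₂x hw2y hcut2 hz₀sup hw₂sup hglue2.1 hglue2.2
    -- both cuts have a trivial side: direct construction
    rw [not_and_or] at hglue1 hglue2
    have hxz₀ : ¬(∃ v, v ≠ x ∧ v ∉ ({z₀, w} : Set V) ∧ AReach H {z₀, w} x v) →
        ¬(∃ v, v ≠ x ∧ v ∉ ({z₀, w₂} : Set V) ∧ AReach H {z₀, w₂} x v) → False := by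
      intro hA hB
      obtain ⟨Q, hQp, hQz⟩ := havoid z₀ hz₀x hz₀y
      obtain ⟨t, hxt, htQ⟩ := hsecond x y Q hxy
      rcases hNbr x z₀ w hz₀x hwx hA t hxt with rfl | rfl
      · exact hQz htQ
      · rcases hNbr x z₀ w₂ hz₀x hw₂x hB t hxt with h | h
        · exact hQz (h ▸ htQ)
        · exact hw₂w h.symm
    have hyz₀ : ¬(∃ v, v ≠ y ∧ v ∉ ({z₀, w} : Set V) ∧ AReach H {z₀, w} y v) →
        ¬(∃ v, v ≠ y ∧ v ∉ ({z₀, w₂} : Set V) ∧ AReach H {z₀, w₂} y v) → False := by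
      intro hA hB
      obtain ⟨Q, hQp, hQz⟩ := havoid z₀ hz₀x hz₀y
      obtain ⟨t, hyt, htQ⟩ := hsecond y x Q.reverse hxy.symm
      have htQ' : t ∈ Q.support := by rwa [Walk.support_reverse, List.mem_reverse] at htQ
      rcases hNbr y z₀ w hz₀y hwy hA t hyt with rfl | rfl
      · exact hQz htQ'
      · rcases hNbr y z₀ w₂ hz₀y hw2y hB t hyt with h | h
        · exact hQz (h ▸ htQ')
        · exact hw₂w h.symm
    have hadjx0 : ¬(∃ v, v ≠ x ∧ v ∉ ({z₀, w} : Set V) ∧ AReach H {z₀, w} x v) →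
        H.Adj x z₀ := by
      intro hA
      obtain ⟨Q, hQp, hQz⟩ := havoid w hwx hwy
      obtain ⟨t, hxt, htQ⟩ := hsecond x y Q hxy
      rcases hNbr x z₀ w hz₀x hwx hA t hxt with rfl | rfl
      · exact hxt
      · exact absurd htQ hQz
    have hadjx0' : ¬(∃ v, v ≠ x ∧ v ∉ ({z₀, w₂} : Set V) ∧ AReach H {z₀, w₂} x v) →
        H.Adj x z₀ := by
      intro hB
      obtain ⟨Q, hQp, hQz⟩ := havoid w₂ hw₂x hw2y
      obtain ⟨t, hxt, htQ⟩ := hsecond x y Q hxy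
      rcases hNbr x z₀ w₂ hz₀x hw₂x hB t hxt with rfl | rfl
      · exact hxt
      · exact absurd htQ hQz
    have hadjy0 : ¬(∃ v, v ≠ y ∧ v ∉ ({z₀, w} : Set V) ∧ AReach H {z₀, w} y v) →
        H.Adj y z₀ := by
      intro hA
      obtain ⟨Q, hQp, hQz⟩ := havoid w hwx hwy
      obtain ⟨t, hyt, htQ⟩ := hsecond y x Q.reverse hxy.symm
      have htQ' : t ∈ Q.support := by rwa [Walk.support_reverse, List.mem_reverse] at htQ
      rcases hNbr y z₀ w hz₀y hwy hA t hyt with rfl | rfl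
      · exact hyt
      · exact absurd htQ' hQz
    have hadjy0' : ¬(∃ v, v ≠ y ∧ v ∉ ({z₀, w₂} : Set V) ∧ AReach H {z₀, w₂} y v) →
        H.Adj y z₀ := by
      intro hB
      obtain ⟨Q, hQp, hQz⟩ := havoid w₂ hw₂x hw2y
      obtain ⟨t, hyt, htQ⟩ := hsecond y x Q.reverse hxy.symm
      have htQ' : t ∈ Q.support := by rwa [Walk.support_reverse, List.mem_reverse] at htQ
      rcases hNbr y z₀ w₂ hz₀y hw2y hB t hyt with rfl | rfl
      · exact hyt
      · exact absurd htQ' hQz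
    rcases hglue1 with h1 | h1 <;> rcases hglue2 with h2 | h2
    · exact (hyz₀ h1 h2).elim
    · exact hdirect z₀ hz₀x hz₀y (hadjx0' h2) (hadjy0 h1)
    · exact hdirect z₀ hz₀x hz₀y (hadjx0 h1) (hadjy0' h2)
    · exact (hxz₀ h1 h2).elim

/-- local 2-Menger, no finiteness assumption -/
theorem menger_inf (H : SimpleGraph V) {x y : V} (hxy : x ≠ y) (hna : ¬H.Adj x y)
    (hreach : H.Reachable x y)
    (havoid : ∀ z, z ≠ x → z ≠ y → ∃ W : H.Walk x y, W.IsPath ∧ z ∉ W.support) :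
    MCon H x y := by
  classical
  obtain ⟨R0⟩ := hreach
  set R := R0.bypass with hRdef
  have hRp : R.IsPath := R0.bypass_isPath
  set S : Set V := {z | z ∈ R.support ∧ z ≠ x ∧ z ≠ y} with hS
  have hSfin : S.Finite := by
    refine Set.Finite.subset (List.finite_toSet R.support) ?_
    intro z hz
    exact hz.1
  have hQex : ∀ z ∈ S, ∃ W : H.Walk x y, W.IsPath ∧ z ∉ W.support := by
    intro z hz
    exact havoid z hz.2.1 hz.2.2
  choose Qf hQfp hQfz using hQex
  set Q' : V → H.Walk x y := fun z => if hz : z ∈ S then Qf z hz else R with hQ'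
  set E₀ : Set (Sym2 V) := {e | e ∈ R.edges} ∪ ⋃ z ∈ S, {e | e ∈ (Q' z).edges} with hE₀
  have hE₀fin : E₀.Finite := by
    refine Set.Finite.union (List.finite_toSet R.edges) ?_
    exact Set.Finite.biUnion hSfin (fun z _ => List.finite_toSet (Q' z).edges)
  have hE₀sub : E₀ ⊆ H.edgeSet := by
    intro e he
    rcases he with he | he
    · exact R.edges_subset_edgeSet he
    · simp only [Set.mem_iUnion] at he
      obtain ⟨z, _, hz⟩ := he
      exact (Q' z).edges_subset_edgeSet hz
  set H₀ : SimpleGraph V := SimpleGraph.fromEdgeSet E₀ with hH₀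
  have hH₀edge : H₀.edgeSet = E₀ \ {e | e.IsDiag} := SimpleGraph.edgeSet_fromEdgeSet _
  have hfin₀ : H₀.edgeSet.Finite := by
    rw [hH₀edge]; exact hE₀fin.subset Set.diff_subset
  have hintro : ∀ (W : H.Walk x y), (∀ e ∈ W.edges, e ∈ E₀) →
      ∀ e ∈ W.edges, e ∈ H₀.edgeSet := by
    intro W hWE e he
    rw [hH₀edge]
    exact ⟨hWE e he, H.not_isDiag_of_mem_edgeSet (W.edges_subset_edgeSet he)⟩
  have hRE : ∀ e ∈ R.edges, e ∈ H₀.edgeSet := hintro R (fun e he => Or.inl he)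
  have hQE : ∀ z ∈ S, ∀ e ∈ (Q' z).edges, e ∈ H₀.edgeSet := by
    intro z hz
    refine hintro (Q' z) ?_
    intro e he
    right
    simp only [Set.mem_iUnion]
    exact ⟨z, hz, he⟩
  have hna₀ : ¬ H₀.Adj x y := by
    intro h
    rw [hH₀, SimpleGraph.fromEdgeSet_adj] at h
    exact hna ((SimpleGraph.mem_edgeSet H).1 (hE₀sub h.1))
  have hreach₀ : H₀.Reachable x y := ⟨R.transfer H₀ hRE⟩
  have havoid₀ : ∀ z, z ≠ x → z ≠ y → ∃ W : H₀.Walk x y, W.IsPath ∧ z ∉ W.support := by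
    intro z hzx hzy
    by_cases hzR : z ∈ R.support
    · have hzS : z ∈ S := ⟨hzR, hzx, hzy⟩
      have hQz : (Q' z) = Qf z hzS := by rw [hQ']; simp [hzS]
      refine ⟨(Q' z).transfer H₀ (hQE z hzS), ?_, ?_⟩
      · exact (by rw [hQz]; exact hQfp z hzS : (Q' z).IsPath).transfer _
      · rw [Walk.support_transfer, hQz]
        exact hQfz z hzS
    · exact ⟨R.transfer H₀ hRE, hRp.transfer _, by rwa [Walk.support_transfer]⟩
  obtain ⟨P₁, P₂, hP₁p, hP₂p, hdisj⟩ :=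
    menger_aux (mu H₀) H₀ x y hfin₀ le_rfl hxy hna₀ hreach₀ havoid₀
  have hback : ∀ (W : H₀.Walk x y), ∀ e ∈ W.edges, e ∈ H.edgeSet := by
    intro W e he
    have := W.edges_subset_edgeSet he
    rw [hH₀edge] at this
    exact hE₀sub this.1
  refine ⟨P₁.transfer H (hback P₁), P₂.transfer H (hback P₂),
    hP₁p.transfer _, hP₂p.transfer _, ?_⟩
  intro v h1 h2
  rw [Walk.support_transfer] at h1 h2
  exact hdisj v h1 h2

end Menger

end Aux

theorem stmt3 {V : Type*} (G : SimpleGraph V) (h2 : TwoConnected G) (hcubic : IsCubic G)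
    {x y : V} (P : G.Walk x y) (hP : P.IsPath) (hsep : Separates G ({x, y} : Set V))
    (hmin : ∀ (x' y' : V) (Q : G.Walk x' y'), Q.IsPath → Separates G ({x', y'} : Set V) →
      P.length ≤ Q.length) :
    ∃ P₁ P₂ P₃ : G.Walk x y, P₁.IsPath ∧ P₂.IsPath ∧ P₃.IsPath ∧
      P₁ ≠ P₂ ∧ P₁ ≠ P₃ ∧ P₂ ≠ P₃ ∧
      InternallyDisjoint P₁ P₂ ∧ InternallyDisjoint P₁ P₃ ∧ InternallyDisjoint P₂ P₃ := by
  classical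
  open Aux in
  -- x ≠ y
  have hxy : x ≠ y := by
    intro h
    subst h
    rw [Set.pair_eq_singleton] at hsep
    exact hsep (h2.2.2 x).preconnected
  set T : Set V := {x, y} with hTdef
  have hxT : x ∈ T := by simp [hTdef]
  have hyT : y ∈ T := by simp [hTdef]
  -- two-connectivity in walk form
  have hconn2 : ∀ (t u v : V), u ≠ t → v ≠ t → Aux.AReach G {t} u v := by
    intro t u v hut hvt
    have hpre := (h2.2.2 t).preconnected
    have hu : u ∈ ({t}ᶜ : Set V) := by simpa using hut
    have hv : v ∈ ({t}ᶜ : Set V) := by simpa using hvt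
    obtain ⟨W, hW⟩ := Aux.induce_toWalk (s := ({t}ᶜ : Set V)) ((hpre ⟨u, hu⟩ ⟨v, hv⟩).some)
    exact ⟨W, fun a ha => by simpa using hW a ha⟩
  -- two vertices in different components of G - {x,y}
  have hex : ∃ (u v : ↥(Tᶜ)), ¬ (G.induce (Tᶜ : Set V)).Reachable u v := by
    by_contra hc
    push_neg at hc
    exact hsep (fun u v => hc u v)
  obtain ⟨⟨u₀, hu₀⟩, ⟨w₀, hw₀⟩, hnr⟩ := hex
  have hu₀T : u₀ ∉ T := hu₀
  have hw₀T : w₀ ∉ T := hw₀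
  have hnconn : ¬ Aux.AReach G T u₀ w₀ := by
    rintro ⟨W, hW⟩
    exact hnr (Aux.walk_toInduce W (fun a ha => hW a ha) hu₀ hw₀)
  -- side path through the component of u
  have hside : ∀ u : V, u ∉ T →
      ∃ W : G.Walk x y, W.IsPath ∧
        (∀ v ∈ W.support, v = x ∨ v = y ∨ (v ∉ T ∧ Aux.AReach G T u v)) ∧
        ∃ a, a ∈ W.support ∧ a ∉ T ∧ Aux.AReach G T u a := by
    intro u huT
    have hux : u ≠ x := fun h => huT (h ▸ hxT)
    have huy : u ≠ y := fun h => huT (h ▸ hyT)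
    obtain ⟨W1, hW1⟩ := hconn2 y u x huy hxy
    set P1 := W1.bypass with hP1def
    have hP1p : P1.IsPath := W1.bypass_isPath
    have hP1y : ∀ a ∈ P1.support, a ≠ y :=
      fun a ha => by simpa using hW1 a (W1.support_bypass_subset ha)
    obtain ⟨a, hxa, rest, hrest⟩ := Walk.exists_eq_cons_of_ne (Ne.symm hux) P1.reverse
    have hrevp := hP1p.reverse
    rw [hrest, Walk.cons_isPath_iff] at hrevp
    obtain ⟨hrestp, hxrest⟩ := hrevp
    have hrestsub : ∀ b ∈ rest.support, b ∈ P1.support := by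
      intro b hb
      have : b ∈ P1.reverse.support := by
        rw [hrest, Walk.support_cons]; exact List.mem_cons_of_mem _ hb
      simpa [Walk.support_reverse] using this
    have hax : a ≠ x := hxa.ne'
    have hay : a ≠ y := hP1y a (hrestsub a (Walk.start_mem_support rest))
    have haT : a ∉ T := by simp [hTdef, hax, hay]
    have hua : Aux.AReach G T u a := by
      refine Aux.AReach.symm ⟨rest, ?_⟩
      intro b hb
      have hbx : b ≠ x := fun h => hxrest (h ▸ hb)
      have hby : b ≠ y := hP1y b (hrestsub b hb)
      simp [hTdef, hbx, hby]
    obtain ⟨W2, hW2⟩ := hconn2 x a y hax (Ne.symm hxy)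
    set r := W2.bypass with hrdef
    have hrp : r.IsPath := W2.bypass_isPath
    have hrx : ∀ b ∈ r.support, b ≠ x :=
      fun b hb => by simpa using hW2 b (W2.support_bypass_subset hb)
    have hWp : (Walk.cons hxa r).IsPath := by
      rw [Walk.cons_isPath_iff]
      exact ⟨hrp, fun h => (hrx x h) rfl⟩
    refine ⟨Walk.cons hxa r, hWp, ?_, a, ?_, haT, hua⟩
    · intro v hv
      rcases List.mem_cons.1 (by simpa using hv) with h1 | h1
      · exact Or.inl h1
      · by_cases hvy : v = y
        · exact Or.inr (Or.inl hvy)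
        · refine Or.inr (Or.inr ⟨by simp [hTdef, hrx v h1, hvy], ?_⟩)
          refine hua.trans (Aux.AReach.symm ⟨(r.takeUntil v h1).reverse, ?_⟩)
          intro b hb
          rw [Walk.support_reverse, List.mem_reverse] at hb
          have hb1 : b ∈ r.support := r.support_takeUntil_subset h1 hb
          have hbz : b ≠ y := by
            intro h
            subst h
            exact Aux.end_not_mem_takeUntil hrp h1 hvy hb
          simp [hTdef, hrx b hb1, hbz]
    · rw [Walk.support_cons]
      exact List.mem_cons_of_mem _ (Walk.start_mem_support r)
  by_cases hadjxy : G.Adj x y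
  · -- easy case: edge plus two side paths
    obtain ⟨W₂, hW₂p, hW₂s, a₂, ha₂W, ha₂T, ha₂u⟩ := hside u₀ hu₀T
    obtain ⟨W₃, hW₃p, hW₃s, a₃, ha₃W, ha₃T, ha₃u⟩ := hside w₀ hw₀T
    have hE : (Walk.cons hadjxy Walk.nil : G.Walk x y).IsPath := by
      rw [Walk.isPath_def]; simp [hxy]
    have hEsup : ∀ v, v ∈ (Walk.cons hadjxy Walk.nil : G.Walk x y).support → v = x ∨ v = y := by
      intro v hv
      simpa using hv
    have hK23 : ∀ v, (v ∉ T ∧ Aux.AReach G T u₀ v) → (v ∉ T ∧ Aux.AReach G T w₀ v) → False :=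
      fun v h1 h2 => hnconn (h1.2.trans h2.2.symm)
    refine ⟨Walk.cons hadjxy Walk.nil, W₂, W₃, hE, hW₂p, hW₃p, ?_, ?_, ?_, ?_, ?_, ?_⟩
    · intro h
      have : a₂ ∈ (Walk.cons hadjxy Walk.nil : G.Walk x y).support := h ▸ ha₂W
      rcases hEsup a₂ this with h1 | h1 <;> exact ha₂T (by simp [hTdef, h1])
    · intro h
      have : a₃ ∈ (Walk.cons hadjxy Walk.nil : G.Walk x y).support := h ▸ ha₃W
      rcases hEsup a₃ this with h1 | h1 <;> exact ha₃T (by simp [hTdef, h1])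
    · intro h
      have : a₂ ∈ W₃.support := h ▸ ha₂W
      rcases hW₃s a₂ this with h1 | h1 | h1
      · exact ha₂T (by simp [hTdef, h1])
      · exact ha₂T (by simp [hTdef, h1])
      · exact hK23 a₂ ⟨ha₂T, ha₂u⟩ h1
    · intro v hv _; exact hEsup v hv
    · intro v hv _; exact hEsup v hv
    · intro v hv2 hv3
      rcases hW₂s v hv2 with h1 | h1 | h1
      · exact Or.inl h1
      · exact Or.inr h1
      · rcases hW₃s v hv3 with h2 | h2 | h2
        · exact Or.inl h2
        · exact Or.inr h2
        · exact (hK23 v h1 h2).elim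
  · -- main case: x and y non-adjacent
    obtain ⟨vP, hxvP, Ptail, hPeq⟩ := Walk.exists_eq_cons_of_ne hxy P
    have hvPx : vP ≠ x := hxvP.ne'
    have hvPy : vP ≠ y := fun h => hadjxy (h ▸ hxvP)
    have hvPT : vP ∉ T := by simp [hTdef, hvPx, hvPy]
    have hPtail : Ptail.IsPath ∧ x ∉ Ptail.support := by
      rw [hPeq, Walk.cons_isPath_iff] at hP
      exact hP
    -- the component condition
    set Kp : V → Prop := fun v => v = x ∨ v = y ∨ (v ∉ T ∧ Aux.AReach G T vP v) with hKp
    have hPK : ∀ v ∈ P.support, Kp v := by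
      intro v hv
      rw [hPeq] at hv
      rcases List.mem_cons.1 (by simpa using hv) with h1 | h1
      · exact Or.inl h1
      · by_cases hvy : v = y
        · exact Or.inr (Or.inl hvy)
        · have hvx : v ≠ x := fun h => hPtail.2 (h ▸ h1)
          refine Or.inr (Or.inr ⟨by simp [hTdef, hvx, hvy], ?_⟩)
          refine Aux.AReach.symm ⟨(Ptail.takeUntil v h1).reverse, ?_⟩
          intro b hb
          rw [Walk.support_reverse, List.mem_reverse] at hb
          have hb1 : b ∈ Ptail.support := Ptail.support_takeUntil_subset h1 hb
          have hbx : b ≠ x := fun h => hPtail.2 (h ▸ hb1)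
          have hby : b ≠ y := by
            intro h
            subst h
            exact Aux.end_not_mem_takeUntil hPtail.1 h1 hvy hb
          simp [hTdef, hbx, hby]
    by_cases hhit : ∃ z, (z ∉ T ∧ Aux.AReach G T vP z) ∧
        ∀ W : G.Walk x y, W.IsPath → (∀ v ∈ W.support, Kp v) → z ∈ W.support
    · -- a hitting vertex exists: contradiction with minimality of P
      exfalso
      obtain ⟨z, ⟨hzT, hzK⟩, hzhit⟩ := hhit
      have hzx : z ≠ x := fun h => hzT (h ▸ hxT)
      have hzy : z ≠ y := fun h => hzT (h ▸ hyT)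
      set RX : Set V := {v | ∃ W : G.Walk x v, ∀ a ∈ W.support,
        a ≠ y ∧ a ≠ z ∧ (a = x ∨ (a ∉ T ∧ Aux.AReach G T vP a))} with hRX
      set RY : Set V := {v | ∃ W : G.Walk y v, ∀ a ∈ W.support,
        a ≠ x ∧ a ≠ z ∧ (a = y ∨ (a ∉ T ∧ Aux.AReach G T vP a))} with hRY
      have r1 : ∀ v, v ∈ RX → v ∈ RY → False := by
        rintro v ⟨Wx, hWx⟩ ⟨Wy, hWy⟩
        set W := Wx.append Wy.reverse with hW
        have hWsup : ∀ a ∈ W.support, a ≠ z ∧ Kp a := by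
          intro a ha
          rw [hW, Walk.mem_support_append_iff] at ha
          rcases ha with ha | ha
          · obtain ⟨h1, h2, h3⟩ := hWx a ha
            rcases h3 with h3 | h3
            · exact ⟨h2, Or.inl h3⟩
            · exact ⟨h2, Or.inr (Or.inr h3)⟩
          · rw [Walk.support_reverse, List.mem_reverse] at ha
            obtain ⟨h1, h2, h3⟩ := hWy a ha
            rcases h3 with h3 | h3
            · exact ⟨h2, Or.inr (Or.inl h3)⟩
            · exact ⟨h2, Or.inr (Or.inr h3)⟩
        have hz := hzhit W.bypass W.bypass_isPath
          (fun v hv => (hWsup v (W.support_bypass_subset hv)).2)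
        exact (hWsup z (W.support_bypass_subset hz)).1 rfl
      have r2 : ∀ v, v ∉ T → Aux.AReach G T vP v → v ≠ z → v ∈ RX ∪ RY := by
        intro v hvT hvK hvz
        have hvx : v ≠ x := fun h => hvT (h ▸ hxT)
        have hvy : v ≠ y := fun h => hvT (h ▸ hyT)
        obtain ⟨W1, hW1⟩ := hconn2 z v x hvz (Ne.symm hzx)
        set P1 := W1.bypass with hP1def
        have hP1p : P1.IsPath := W1.bypass_isPath
        have hP1z : ∀ a ∈ P1.support, a ≠ z :=
          fun a ha => by simpa using hW1 a (W1.support_bypass_subset ha)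
        obtain ⟨t, ht, W₁, hsub, hav⟩ := Aux.first_hit_pair (s₁ := x) (s₂ := y) P1
          (Or.inl (Walk.end_mem_support P1))
        set Pv := W₁.bypass with hPvdef
        have hPvp : Pv.IsPath := W₁.bypass_isPath
        have hPvsub : ∀ a ∈ Pv.support, a ∈ P1.support :=
          fun a ha => hsub a (W₁.support_bypass_subset ha)
        have hPvav : ∀ a ∈ Pv.support, a ≠ t → a ≠ x ∧ a ≠ y :=
          fun a ha hat => hav a (W₁.support_bypass_subset ha) hat
        have hPvK : ∀ a ∈ Pv.support, a ≠ t → (a ∉ T ∧ Aux.AReach G T vP a) := by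
          intro a ha hat
          obtain ⟨h1, h2⟩ := hPvav a ha hat
          refine ⟨by simp [hTdef, h1, h2], ?_⟩
          refine hvK.trans (Aux.AReach.symm ⟨(Pv.takeUntil a ha).reverse, ?_⟩)
          intro b hb
          rw [Walk.support_reverse, List.mem_reverse] at hb
          have hbPv : b ∈ Pv.support := Pv.support_takeUntil_subset ha hb
          have hbt : b ≠ t := by
            intro h
            subst h
            exact Aux.end_not_mem_takeUntil hPvp ha hat hb
          obtain ⟨h3, h4⟩ := hPvav b hbPv hbt
          simp [hTdef, h3, h4]
        rcases ht with rfl | rfl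
        · left
          refine ⟨Pv.reverse, ?_⟩
          intro a ha
          rw [Walk.support_reverse, List.mem_reverse] at ha
          have haz : a ≠ z := hP1z a (hPvsub a ha)
          by_cases hat : a = t
          · exact ⟨hat ▸ hxy, haz, Or.inl hat⟩
          · exact ⟨(hPvav a ha hat).2, haz, Or.inr (hPvK a ha hat)⟩
        · right
          refine ⟨Pv.reverse, ?_⟩
          intro a ha
          rw [Walk.support_reverse, List.mem_reverse] at ha
          have haz : a ≠ z := hP1z a (hPvsub a ha)
          by_cases hat : a = t
          · exact ⟨hat ▸ (Ne.symm hxy), haz, Or.inl hat⟩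
          · exact ⟨(hPvav a ha hat).1, haz, Or.inr (hPvK a ha hat)⟩
      -- the separation facts
      have r3 : ∀ v, v ∈ RY → v ∉ T → Aux.AReach G T vP v → v ≠ z →
          Separates G ({z, y} : Set V) := by
        intro v hvRY hvT hvK hvz
        have hvy : v ≠ y := fun h => hvT (h ▸ hyT)
        refine Aux.sep_of_not_reach (u := x) (v := v) (by simp [Ne.symm hzx, hxy]) (by simp [hvz, hvy]) ?_
        rintro ⟨W, hW⟩
        set q := W.bypass with hqdef
        have hqp : q.IsPath := W.bypass_isPath
        have hqav : ∀ a ∈ q.support, a ≠ z ∧ a ≠ y := by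
          intro a ha
          have := hW a (W.support_bypass_subset ha)
          simp only [Set.mem_insert_iff, Set.mem_singleton_iff] at this
          push_neg at this
          exact this
        have hvRX : v ∈ RX := by
          refine ⟨q, ?_⟩
          intro a ha
          refine ⟨(hqav a ha).2, (hqav a ha).1, ?_⟩
          by_cases hax : a = x
          · exact Or.inl hax
          · right
            have haK : Aux.AReach G T a v := by
              refine ⟨q.dropUntil a ha, ?_⟩
              intro b hb
              have hbq : b ∈ q.support := q.support_dropUntil_subset ha hb
              have hbx : b ≠ x := by
                intro h
                subst h
                exact Aux.start_not_mem_dropUntil hqp ha hax hb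
              simp [hTdef, hbx, (hqav b hbq).2]
            exact ⟨by simp [hTdef, hax, (hqav a ha).2], hvK.trans haK.symm⟩
        exact r1 v hvRX hvRY
      have r4 : ∀ v, v ∈ RX → v ∉ T → Aux.AReach G T vP v → v ≠ z →
          Separates G ({x, z} : Set V) := by
        intro v hvRX hvT hvK hvz
        have hvx : v ≠ x := fun h => hvT (h ▸ hxT)
        refine Aux.sep_of_not_reach (u := y) (v := v) (by simp [Ne.symm hxy, Ne.symm hzy]) (by simp [hvx, hvz]) ?_
        rintro ⟨W, hW⟩
        set q := W.bypass with hqdef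
        have hqp : q.IsPath := W.bypass_isPath
        have hqav : ∀ a ∈ q.support, a ≠ x ∧ a ≠ z := by
          intro a ha
          have := hW a (W.support_bypass_subset ha)
          simp only [Set.mem_insert_iff, Set.mem_singleton_iff] at this
          push_neg at this
          exact this
        have hvRY : v ∈ RY := by
          refine ⟨q, ?_⟩
          intro a ha
          refine ⟨(hqav a ha).1, (hqav a ha).2, ?_⟩
          by_cases hay : a = y
          · exact Or.inl hay
          · right
            have haK : Aux.AReach G T a v := by
              refine ⟨q.dropUntil a ha, ?_⟩
              intro b hb
              have hbq : b ∈ q.support := q.support_dropUntil_subset ha hb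
              have hby : b ≠ y := by
                intro h
                subst h
                exact Aux.start_not_mem_dropUntil hqp ha hay hb
              simp [hTdef, hby, (hqav b hbq).1]
            exact ⟨by simp [hTdef, hay, (hqav a ha).1], hvK.trans haK.symm⟩
        exact r1 v hvRX hvRY
      -- split P at z
      have hzP : z ∈ P.support := hzhit P hP hPK
      have hlen : (P.takeUntil z hzP).length + (P.dropUntil z hzP).length = P.length := by
        have := congrArg Walk.length (P.take_spec hzP)
        rwa [Walk.length_append] at this
      have hlen1 : 1 ≤ (P.takeUntil z hzP).length := by
        rcases Nat.eq_zero_or_pos (P.takeUntil z hzP).length with h | h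
        · exact absurd (Walk.eq_of_length_eq_zero h) hzx.symm
        · exact h
      have hlen2 : 1 ≤ (P.dropUntil z hzP).length := by
        rcases Nat.eq_zero_or_pos (P.dropUntil z hzP).length with h | h
        · exact absurd (Walk.eq_of_length_eq_zero h) hzy
        · exact h
      -- final case analysis
      by_cases hRYn : ∃ v, v ∉ T ∧ Aux.AReach G T vP v ∧ v ≠ z ∧ v ∈ RY
      · obtain ⟨v, h1, h2, h3, h4⟩ := hRYn
        have hsepzy := r3 v h4 h1 h2 h3
        have := hmin z y (P.dropUntil z hzP) (hP.dropUntil hzP) hsepzy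
        omega
      by_cases hRXn : ∃ v, v ∉ T ∧ Aux.AReach G T vP v ∧ v ≠ z ∧ v ∈ RX
      · obtain ⟨v, h1, h2, h3, h4⟩ := hRXn
        have hsepxz := r4 v h4 h1 h2 h3
        have := hmin x z (P.takeUntil z hzP) (hP.takeUntil hzP) hsepxz
        omega
      · -- the component is just {z}: contradiction with cubicity
        have hKz : ∀ v, v ∉ T → Aux.AReach G T vP v → v = z := by
          intro v hvT hvK
          by_contra hvz
          rcases r2 v hvT hvK hvz with h | h
          · exact hRXn ⟨v, hvT, hvK, hvz, h⟩
          · exact hRYn ⟨v, hvT, hvK, hvz, h⟩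
        have hNz : G.neighborSet z ⊆ {x, y} := by
          intro t ht
          have hadj : G.Adj z t := ht
          by_contra htT
          simp only [Set.mem_insert_iff, Set.mem_singleton_iff] at htT
          push_neg at htT
          have htT' : t ∉ T := by simp [hTdef, htT.1, htT.2]
          have hzt : Aux.AReach G T z t := by
            refine ⟨Walk.cons hadj Walk.nil, ?_⟩
            intro a ha
            rcases (by simpa using ha : a = z ∨ a = t) with h1 | h1
            · subst h1; exact hzT
            · subst h1; exact htT'
          have := hKz t htT' (hzK.trans hzt)
          exact hadj.ne this.symm
        have hle : (G.neighborSet z).ncard ≤ 2 := by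
          calc (G.neighborSet z).ncard ≤ ({x, y} : Set V).ncard :=
              Set.ncard_le_ncard hNz ((Set.finite_singleton _).insert _)
            _ = 2 := Set.ncard_pair hxy
        rw [hcubic z] at hle
        omega
    · -- no hitting vertex: two disjoint paths through the component of vP via Menger
      push_neg at hhit
      set EK : Set (Sym2 V) := {e | e ∈ G.edgeSet ∧ ∀ a ∈ e, Kp a} with hEK
      set HK : SimpleGraph V := SimpleGraph.fromEdgeSet EK with hHK
      have hHKedge : HK.edgeSet = EK \ {e | e.IsDiag} := SimpleGraph.edgeSet_fromEdgeSet _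
      have t1 : ∀ (W : G.Walk x y), (∀ v ∈ W.support, Kp v) →
          ∀ e ∈ W.edges, e ∈ HK.edgeSet := by
        intro W hWs e he
        rw [hHKedge]
        refine ⟨⟨W.edges_subset_edgeSet he, ?_⟩, G.not_isDiag_of_mem_edgeSet (W.edges_subset_edgeSet he)⟩
        intro a hae
        exact hWs a (Aux.edge_vert_mem_support W he a hae)
      have t2 : ∀ (W : HK.Walk x y), (∀ e ∈ W.edges, e ∈ G.edgeSet) ∧
          (∀ v ∈ W.support, Kp v) := by
        intro W
        have hWE : ∀ e ∈ W.edges, e ∈ EK := by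
          intro e he
          have := W.edges_subset_edgeSet he
          rw [hHKedge] at this
          exact this.1
        refine ⟨fun e he => (hWE e he).1, ?_⟩
        refine Aux.support_subset_of_edges (S := {v | Kp v}) W ?_ (Or.inl rfl)
        intro e he a hae
        exact (hWE e he).2 a hae
      have hnaK : ¬ HK.Adj x y := by
        intro h
        rw [hHK, SimpleGraph.fromEdgeSet_adj] at h
        exact hadjxy ((SimpleGraph.mem_edgeSet G).1 h.1.1)
      obtain ⟨WS, hWSp, hWSs, aS, haSW, haST, haSu⟩ := hside vP hvPT
      have hWSK : ∀ v ∈ WS.support, Kp v := hWSs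
      have hreachK : HK.Reachable x y := ⟨WS.transfer HK (t1 WS hWSK)⟩
      have havoidK : ∀ z, z ≠ x → z ≠ y → ∃ W : HK.Walk x y, W.IsPath ∧ z ∉ W.support := by
        intro z hzx hzy
        by_cases hzK : Aux.AReach G T vP z
        · have hzT : z ∉ T := by simp [hTdef, hzx, hzy]
          obtain ⟨W, hWp, hWK, hWz⟩ := hhit z ⟨hzT, hzK⟩
          refine ⟨W.transfer HK (t1 W hWK), hWp.transfer _, ?_⟩
          rwa [Walk.support_transfer]
        · refine ⟨WS.transfer HK (t1 WS hWSK), hWSp.transfer _, ?_⟩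
          rw [Walk.support_transfer]
          intro hz
          rcases hWSs z hz with h | h | h
          · exact hzx h
          · exact hzy h
          · exact hzK h.2
      obtain ⟨Q₁, Q₂, hQ₁p, hQ₂p, hQdisj⟩ := Aux.menger_inf HK hxy hnaK hreachK havoidK
      set P₁ := Q₁.transfer G (t2 Q₁).1 with hP₁def
      set P₂ := Q₂.transfer G (t2 Q₂).1 with hP₂def
      have hP₁p : P₁.IsPath := hQ₁p.transfer _
      have hP₂p : P₂.IsPath := hQ₂p.transfer _
      have hP₁s : ∀ v ∈ P₁.support, Kp v := by
        intro v hv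
        rw [hP₁def, Walk.support_transfer] at hv
        exact (t2 Q₁).2 v hv
      have hP₂s : ∀ v ∈ P₂.support, Kp v := by
        intro v hv
        rw [hP₂def, Walk.support_transfer] at hv
        exact (t2 Q₂).2 v hv
      have hdisj12 : InternallyDisjoint P₁ P₂ := by
        intro v h1 h2
        rw [hP₁def, Walk.support_transfer] at h1
        rw [hP₂def, Walk.support_transfer] at h2
        exact hQdisj v h1 h2
      -- the third path through another component
      have hu' : ∃ u', u' ∉ T ∧ ¬ Aux.AReach G T vP u' := by
        by_cases hc : Aux.AReach G T vP u₀
        · refine ⟨w₀, hw₀T, ?_⟩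
          intro h
          exact hnconn (hc.symm.trans h)
        · exact ⟨u₀, hu₀T, hc⟩
      obtain ⟨u', hu'T, hu'K⟩ := hu'
      obtain ⟨P₃, hP₃p, hP₃s, a₃, ha₃W, ha₃T, ha₃u⟩ := hside u' hu'T
      have hcross : ∀ v, Kp v → v ∈ P₃.support → v = x ∨ v = y := by
        intro v hv h3
        rcases hv with h | h | h
        · exact Or.inl h
        · exact Or.inr h
        · rcases hP₃s v h3 with h4 | h4 | h4
          · exact Or.inl h4
          · exact Or.inr h4
          · exact absurd (h.2.trans h4.2.symm) hu'K
      -- second vertices for distinctness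
      have hsecond : ∀ (Q : G.Walk x y), Q.IsPath → (∀ v ∈ Q.support, Kp v) →
          ∃ t, t ∈ Q.support ∧ t ∉ T ∧ Aux.AReach G T vP t := by
        intro Q hQp hQs
        obtain ⟨t, hxt, Qt, hQt⟩ := Walk.exists_eq_cons_of_ne hxy Q
        have htx : t ≠ x := hxt.ne'
        have hty : t ≠ y := fun h => hadjxy (h ▸ hxt)
        have htQ : t ∈ Q.support := by
          rw [hQt, Walk.support_cons]
          exact List.mem_cons_of_mem _ (Walk.start_mem_support Qt)
        rcases hQs t htQ with h | h | h
        · exact absurd h htx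
        · exact absurd h hty
        · exact ⟨t, htQ, h⟩
      obtain ⟨t₁, ht₁Q, ht₁T, ht₁K⟩ := hsecond P₁ hP₁p hP₁s
      obtain ⟨t₂, ht₂Q, ht₂T, ht₂K⟩ := hsecond P₂ hP₂p hP₂s
      have hne12 : P₁ ≠ P₂ := by
        intro h
        rcases hdisj12 t₁ ht₁Q (h ▸ ht₁Q) with h1 | h1
        · exact ht₁T (h1 ▸ hxT)
        · exact ht₁T (h1 ▸ hyT)
      have hne13 : P₁ ≠ P₃ := by
        intro h
        rcases hcross t₁ (Or.inr (Or.inr ⟨ht₁T, ht₁K⟩)) (h ▸ ht₁Q) with h1 | h1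
        · exact ht₁T (h1 ▸ hxT)
        · exact ht₁T (h1 ▸ hyT)
      have hne23 : P₂ ≠ P₃ := by
        intro h
        rcases hcross t₂ (Or.inr (Or.inr ⟨ht₂T, ht₂K⟩)) (h ▸ ht₂Q) with h1 | h1
        · exact ht₂T (h1 ▸ hxT)
        · exact ht₂T (h1 ▸ hyT)
      refine ⟨P₁, P₂, P₃, hP₁p, hP₂p, hP₃p, hne12, hne13, hne23, hdisj12, ?_, ?_⟩
      · intro v h1 h3
        exact hcross v (hP₁s v h1) h3
      · intro v h2 h3
        exact hcross v (hP₂s v h2) h3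
end

section
/- Let G be the Cayley graph of a group Γ with respect to a symmetric generating set S. Then the set of edge sets (circuits) of closed walks induced by the relators of any presentation ⟨S | R⟩ of Γ generates the cycle space of G over Z/2Z. -/
open SimpleGraph

/-- The Cayley graph of `Γ` with respect to a (symmetric) set `S ⊆ Γ`. -/
def cayley (Γ : Type*) [Group Γ] (S : Set Γ) : SimpleGraph Γ :=
  SimpleGraph.fromRel (fun x y => x⁻¹ * y ∈ S)

/-- The circuit of a closed walk: the `ZMod 2`-valued indicator of edges traversed
an odd number of times. -/
noncomputable def walkCircuit {V : Type*} {G : SimpleGraph V} {u : V} (w : G.Walk u u) :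
    Sym2 V → ZMod 2 :=
  fun e => letI := Classical.decEq V; ((w.edges.count e : ℕ) : ZMod 2)

/-- The (finitary) cycle space of `G` over `ZMod 2`, spanned by the circuits of cycles. -/
noncomputable def cycleSpace {V : Type*} (G : SimpleGraph V) :
    Submodule (ZMod 2) (Sym2 V → ZMod 2) :=
  Submodule.span (ZMod 2) {f | ∃ (v : V) (w : G.Walk v v), w.IsCycle ∧ f = walkCircuit w}

/-- The list of group elements (generators or their inverses) given by the letters of a
word in the free group over `S`. -/
noncomputable def wordSteps {Γ : Type*} [Group Γ] {S : Set Γ} (w : FreeGroup ↥S) : List Γ :=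
  letI := Classical.decEq ↥S
  w.toWord.map (fun p => if p.2 then (p.1 : Γ) else (p.1 : Γ)⁻¹)

/-- The edges of the walk starting at `g` and following the steps in `l`. -/
def edgeList {Γ : Type*} [Group Γ] (g : Γ) : List Γ → List (Sym2 Γ)
  | [] => []
  | s :: rest => s(g, g * s) :: edgeList (g * s) rest

/-- The circuit (mod-2 edge indicator) of the walk starting at `g` following the steps `l`. -/
noncomputable def circuitOf {Γ : Type*} [Group Γ] (g : Γ) (l : List Γ) : Sym2 Γ → ZMod 2 :=
  fun e => letI := Classical.decEq Γ; (((edgeList g l).count e : ℕ) : ZMod 2)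

section Aux
attribute [local instance] Classical.decEq
variable {Γ : Type*} [Group Γ] {S : Set Γ}

noncomputable def stepsL (S : Set Γ) (L : List (↥S × Bool)) : List Γ :=
  L.map (fun p => if p.2 then (p.1 : Γ) else (p.1 : Γ)⁻¹)

lemma wordSteps_eq (w : FreeGroup ↥S) : wordSteps w = stepsL S w.toWord := by
  unfold wordSteps stepsL
  congr 1
  congr 1
  exact Subsingleton.elim _ _

lemma edgeList_append (g : Γ) (l₁ l₂ : List Γ) :
    edgeList g (l₁ ++ l₂) = edgeList g l₁ ++ edgeList (g * l₁.prod) l₂ := by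
  induction l₁ generalizing g with
  | nil => simp [edgeList]
  | cons s t ih => simp [edgeList, ih, mul_assoc]

lemma circuitOf_append (g : Γ) (l₁ l₂ : List Γ) :
    circuitOf g (l₁ ++ l₂) = circuitOf g l₁ + circuitOf (g * l₁.prod) l₂ := by
  funext e
  simp [circuitOf, edgeList_append, List.count_append]

lemma circuitOf_cancel (g s : Γ) (l : List Γ) :
    circuitOf g (s :: s⁻¹ :: l) = circuitOf g l := by
  funext e
  have h1 : g * s * s⁻¹ = g := mul_inv_cancel_right g s
  have h2 : s(g * s, g) = s(g, g * s) := Sym2.eq_swap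
  simp only [circuitOf, edgeList, h1, h2, List.count_cons]
  push_cast
  rw [add_assoc, CharTwo.add_self_eq_zero, add_zero]

lemma stepsL_step {L L' : List (↥S × Bool)} (h : FreeGroup.Red.Step L L') :
    (stepsL S L).prod = (stepsL S L').prod ∧
      ∀ g : Γ, circuitOf g (stepsL S L) = circuitOf g (stepsL S L') := by
  cases h with
  | @not L₁ L₂ x b =>
    have hs : stepsL S (L₁ ++ (x, b) :: (x, !b) :: L₂) =
        stepsL S L₁ ++ (if b then (x:Γ) else (x:Γ)⁻¹) ::
          (if b then (x:Γ) else (x:Γ)⁻¹)⁻¹ :: stepsL S L₂ := by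
      cases b <;> simp [stepsL]
    have hs' : stepsL S (L₁ ++ L₂) = stepsL S L₁ ++ stepsL S L₂ := by simp [stepsL]
    constructor
    · rw [hs, hs']
      simp [List.prod_append]
    · intro g
      rw [hs, hs', circuitOf_append, circuitOf_append, circuitOf_cancel]

lemma stepsL_red {L L' : List (↥S × Bool)} (h : FreeGroup.Red L L') :
    (stepsL S L).prod = (stepsL S L').prod ∧
      ∀ g : Γ, circuitOf g (stepsL S L) = circuitOf g (stepsL S L') := by
  induction h with
  | refl => exact ⟨rfl, fun _ => rfl⟩
  | tail _ hstep ih =>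
    obtain ⟨h1, h2⟩ := stepsL_step hstep
    exact ⟨ih.1.trans h1, fun g => (ih.2 g).trans (h2 g)⟩

/-- The image of the free group element under the lift map. -/
noncomputable abbrev phi (S : Set Γ) : FreeGroup ↥S →* Γ :=
  FreeGroup.lift (fun s : ↥S => (s : Γ))

lemma stepsL_prod_mk (L : List (↥S × Bool)) :
    (stepsL S L).prod = phi S (FreeGroup.mk L) := by
  rw [FreeGroup.lift_mk]
  congr 1
  simp [stepsL, Bool.cond_eq_if]

lemma toWord_red (L : List (↥S × Bool)) :
    FreeGroup.Red L ((FreeGroup.mk L).toWord) := by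
  rw [FreeGroup.toWord_mk]
  exact FreeGroup.reduce.red

/-- circuit of a free group element from basepoint g -/
noncomputable def cw (g : Γ) (w : FreeGroup ↥S) : Sym2 Γ → ZMod 2 :=
  circuitOf g (stepsL S w.toWord)

lemma cw_mk (g : Γ) (L : List (↥S × Bool)) :
    cw g (FreeGroup.mk L) = circuitOf g (stepsL S L) :=
  ((stepsL_red (toWord_red L)).2 g).symm

lemma stepsL_prod_toWord (w : FreeGroup ↥S) :
    (stepsL S w.toWord).prod = phi S w := by
  rw [stepsL_prod_mk, FreeGroup.mk_toWord]

lemma circuitOf_nil (g : Γ) : circuitOf g ([] : List Γ) = 0 := by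
  funext e
  simp [circuitOf, edgeList]

lemma cw_one (g : Γ) : cw g (1 : FreeGroup ↥S) = 0 := by
  rw [cw, FreeGroup.toWord_one]
  exact circuitOf_nil g

lemma cw_mul (g : Γ) (w₁ w₂ : FreeGroup ↥S) :
    cw g (w₁ * w₂) = cw g w₁ + cw (g * phi S w₁) w₂ := by
  conv_lhs => rw [← FreeGroup.mk_toWord (x := w₁), ← FreeGroup.mk_toWord (x := w₂),
    FreeGroup.mul_mk]
  rw [cw_mk]
  have : stepsL S (w₁.toWord ++ w₂.toWord) = stepsL S w₁.toWord ++ stepsL S w₂.toWord := by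
    simp [stepsL]
  rw [this, circuitOf_append, stepsL_prod_toWord]
  rfl

lemma addself (x : Sym2 Γ → ZMod 2) : x + x = 0 := by
  rw [← two_smul (ZMod 2) x, show (2 : ZMod 2) = 0 by decide, zero_smul]

lemma cw_inv (h : Γ) (w : FreeGroup ↥S) :
    cw h w⁻¹ = cw (h * (phi S w)⁻¹) w := by
  have h0 := cw_mul (h * (phi S w)⁻¹) w w⁻¹
  rw [mul_inv_cancel, cw_one, inv_mul_cancel_right] at h0
  have := congrArg (fun z => cw (h * (phi S w)⁻¹) w + z) h0.symm
  simpa [← add_assoc, addself] using this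

lemma cw_mem (R : Set (FreeGroup ↥S))
    (hR : ∀ r ∈ R, phi S r = 1)
    {w : FreeGroup ↥S} (hw : w ∈ Subgroup.normalClosure R) (g : Γ) :
    cw g w ∈ Submodule.span (ZMod 2)
      {f | ∃ (g : Γ) (r : FreeGroup ↥S), r ∈ R ∧ f = circuitOf g (wordSteps r)} := by
  set T := Submodule.span (ZMod 2)
      {f | ∃ (g : Γ) (r : FreeGroup ↥S), r ∈ R ∧ f = circuitOf g (wordSteps r)} with hT
  have hw' : w ∈ Subgroup.closure (Group.conjugatesOfSet R) := hw
  refine Subgroup.closure_induction (p := fun x _ => ∀ g : Γ, cw g x ∈ T)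
    ?_ ?_ ?_ ?_ hw' g
  · intro x hx g
    rw [Group.mem_conjugatesOfSet_iff] at hx
    obtain ⟨r, hr, hconj⟩ := hx
    obtain ⟨u, hu⟩ := isConj_iff.mp hconj
    have key : cw g x = cw (g * phi S u) r := by
      rw [← hu, cw_mul, cw_mul, map_mul, hR r hr, mul_one, cw_inv, mul_inv_cancel_right]
      rw [add_right_comm, addself, zero_add]
    rw [key]
    apply Submodule.subset_span
    exact ⟨g * phi S u, r, hr, by rw [wordSteps_eq]; rfl⟩
  · intro g
    rw [cw_one]
    exact Submodule.zero_mem T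
  · intro x y _ _ ihx ihy g
    rw [cw_mul]
    exact Submodule.add_mem T (ihx g) (ihy _)
  · intro x _ ih g
    rw [cw_inv]
    exact ih _

lemma cayley_adj (hsym : ∀ s ∈ S, s⁻¹ ∈ S) {x y : Γ} (h : (cayley Γ S).Adj x y) :
    x⁻¹ * y ∈ S := by
  rw [cayley, SimpleGraph.fromRel_adj] at h
  rcases h with ⟨-, h | h⟩
  · exact h
  · have := hsym _ h
    rwa [mul_inv_rev, inv_inv] at this

def walkWord (hsym : ∀ s ∈ S, s⁻¹ ∈ S) :
    {u v : Γ} → (cayley Γ S).Walk u v → List (↥S × Bool)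
  | _, _, SimpleGraph.Walk.nil => []
  | u, _, SimpleGraph.Walk.cons (v := x) h p =>
      (⟨u⁻¹ * x, cayley_adj hsym h⟩, true) :: walkWord hsym p

lemma walkWord_edges (hsym : ∀ s ∈ S, s⁻¹ ∈ S) {u v : Γ} (p : (cayley Γ S).Walk u v) :
    edgeList u (stepsL S (walkWord hsym p)) = p.edges := by
  induction p with
  | nil => rfl
  | cons h p ih =>
    simp only [stepsL] at ih
    simp only [walkWord, stepsL, List.map_cons, edgeList, if_pos, SimpleGraph.Walk.edges_cons,
      mul_inv_cancel_left]
    rw [ih]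

lemma walkWord_prod (hsym : ∀ s ∈ S, s⁻¹ ∈ S) {u v : Γ} (p : (cayley Γ S).Walk u v) :
    (stepsL S (walkWord hsym p)).prod = u⁻¹ * v := by
  induction p with
  | nil => simp [walkWord, stepsL]
  | cons h p ih =>
    simp only [walkWord, stepsL, List.map_cons, List.prod_cons, if_pos] at ih ⊢
    rw [ih, mul_assoc, mul_inv_cancel_left]

lemma walkCircuit_eq (hsym : ∀ s ∈ S, s⁻¹ ∈ S) {v : Γ} (w : (cayley Γ S).Walk v v) :
    walkCircuit w = circuitOf v (stepsL S (walkWord hsym w)) := by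
  funext e
  unfold walkCircuit circuitOf
  rw [walkWord_edges]

end Aux

/-- The circuits of the closed walks induced by the relators of any presentation `⟨S ∣ R⟩`
of `Γ` generate the cycle space of the Cayley graph `Cay(Γ, S)`. -/
theorem stmt4 {Γ : Type*} [Group Γ] (S : Set Γ)
    (hsym : ∀ s ∈ S, s⁻¹ ∈ S) (hgen : Subgroup.closure S = ⊤)
    (R : Set (FreeGroup ↥S))
    (hpres : (FreeGroup.lift (fun s : ↥S => (s : Γ))).ker = Subgroup.normalClosure R) :
    cycleSpace (cayley Γ S) ≤ Submodule.span (ZMod 2)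
      {f | ∃ (g : Γ) (r : FreeGroup ↥S), r ∈ R ∧ f = circuitOf g (wordSteps r)} := by
  rw [cycleSpace]
  apply Submodule.span_le.mpr
  rintro f ⟨v, w, _, rfl⟩
  have hR : ∀ r ∈ R, phi S r = 1 := by
    intro r hr
    have : r ∈ (FreeGroup.lift (fun s : ↥S => (s : Γ))).ker := by
      rw [hpres]; exact Subgroup.subset_normalClosure hr
    exact this
  have hker : FreeGroup.mk (walkWord hsym w) ∈ Subgroup.normalClosure R := by
    rw [← hpres]
    have : phi S (FreeGroup.mk (walkWord hsym w)) = 1 := by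
      rw [← stepsL_prod_mk, walkWord_prod]
      simp
    exact this
  have := cw_mem R hR hker v
  rwa [cw_mk, ← walkCircuit_eq hsym w] at this
end

section
/- Let G = Cay⟨b, c, d | b², c², d², (bc)^{2k}, (cbcd)^m⟩ with k, m ≥ 2. Then G has no hinge, i.e., no edge xy of G has the property that G - {x, y} is disconnected. -/
open SimpleGraph

/-- Relators `b²,c²,d²,(bc)^{2k},(cbcd)ᵐ` in the free group on `{b,c,d}`
(`0 ↦ b`, `1 ↦ c`, `2 ↦ d`). -/
def relsV (k m : ℕ) : Set (FreeGroup (Fin 3)) :=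
  {FreeGroup.of 0 ^ 2, FreeGroup.of 1 ^ 2, FreeGroup.of 2 ^ 2,
    (FreeGroup.of 0 * FreeGroup.of 1) ^ (2 * k),
    (FreeGroup.of 1 * FreeGroup.of 0 * FreeGroup.of 1 * FreeGroup.of 2) ^ m}

/-- The Cayley graph of `⟨b,c,d ∣ b²,c²,d²,(bc)^{2k},(cbcd)ᵐ⟩` with respect to `{b,c,d}`. -/
def GV (k m : ℕ) : SimpleGraph (PresentedGroup (relsV k m)) :=
  cayley (PresentedGroup (relsV k m))
    {PresentedGroup.of 0, PresentedGroup.of 1, PresentedGroup.of 2}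
namespace P17
open DihedralGroup

variable {k m : ℕ}

abbrev Γ (k m : ℕ) := PresentedGroup (relsV k m)

def B : Γ k m := PresentedGroup.of 0
def C : Γ k m := PresentedGroup.of 1
def D : Γ k m := PresentedGroup.of 2

lemma mk_rel {r : FreeGroup (Fin 3)} (h : r ∈ relsV k m) :
    PresentedGroup.mk (relsV k m) r = 1 :=
  (QuotientGroup.eq_one_iff _).mpr (Subgroup.subset_normalClosure h)

lemma B_mul_B : (B : Γ k m) * B = 1 := by
  have := mk_rel (k := k) (m := m) (r := FreeGroup.of 0 ^ 2) (by simp [relsV])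
  simpa [sq, B, PresentedGroup.of, map_mul] using this

lemma C_mul_C : (C : Γ k m) * C = 1 := by
  have := mk_rel (k := k) (m := m) (r := FreeGroup.of 1 ^ 2) (by simp [relsV])
  simpa [sq, C, PresentedGroup.of, map_mul] using this

lemma D_mul_D : (D : Γ k m) * D = 1 := by
  have := mk_rel (k := k) (m := m) (r := FreeGroup.of 2 ^ 2) (by simp [relsV])
  simpa [sq, D, PresentedGroup.of, map_mul] using this

lemma BC_pow : ((B : Γ k m) * C) ^ (2 * k) = 1 := by
  have := mk_rel (k := k) (m := m) (r := (FreeGroup.of 0 * FreeGroup.of 1) ^ (2*k))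
    (by simp [relsV])
  simpa [B, C, PresentedGroup.of, map_mul, map_pow] using this

lemma CBCD_pow : ((C : Γ k m) * B * C * D) ^ m = 1 := by
  have := mk_rel (k := k) (m := m)
    (r := (FreeGroup.of 1 * FreeGroup.of 0 * FreeGroup.of 1 * FreeGroup.of 2) ^ m)
    (by simp [relsV])
  simpa [B, C, D, PresentedGroup.of, map_mul, map_pow] using this

lemma B_inv : (B : Γ k m)⁻¹ = B := inv_eq_of_mul_eq_one_right B_mul_B
lemma C_inv : (C : Γ k m)⁻¹ = C := inv_eq_of_mul_eq_one_right C_mul_C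
lemma D_inv : (D : Γ k m)⁻¹ = D := inv_eq_of_mul_eq_one_right D_mul_D

/-- ψ1 : into the dihedral group of order `4k`. -/
def f1 (k m : ℕ) : Fin 3 → DihedralGroup (2 * k) := ![sr 0, sr 1, sr 2]

lemma f1_rels : ∀ r ∈ relsV k m, FreeGroup.lift (f1 k m) r = 1 := by
  intro r hr
  rcases hr with h | h | h | h | h <;> subst h <;>
      simp [f1, map_pow, map_mul, sq, one_def, -r_zero] <;>
    norm_num [← one_def, one_pow]

def f2 (k m : ℕ) : Fin 3 → DihedralGroup m := ![sr 0, 1, sr 1]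

lemma f2_rels : ∀ r ∈ relsV k m, FreeGroup.lift (f2 k m) r = 1 := by
  intro r hr
  rcases hr with h | h | h | h | h <;> subst h <;>
      simp [f2, map_pow, map_mul, sq, one_def, -r_zero] <;>
    simp [pow_mul, sq, ← one_def]

def f3 (k m : ℕ) : Fin 3 → ℤˣ := ![1, -1, 1]

lemma f3_rels : ∀ r ∈ relsV k m, FreeGroup.lift (f3 k m) r = 1 := by
  intro r hr
  rcases hr with h | h | h | h | h <;> subst h <;>
      simp [f3, map_pow, map_mul, sq] <;>
    norm_num [pow_mul]

def ψ1 : Γ k m →* DihedralGroup (2 * k) := PresentedGroup.toGroup f1_rels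
def ψ2 : Γ k m →* DihedralGroup m := PresentedGroup.toGroup f2_rels
def ψ3 : Γ k m →* ℤˣ := PresentedGroup.toGroup f3_rels

@[simp] lemma ψ1_B : ψ1 (B : Γ k m) = sr 0 := PresentedGroup.toGroup.of _
@[simp] lemma ψ1_C : ψ1 (C : Γ k m) = sr 1 := PresentedGroup.toGroup.of _
@[simp] lemma ψ1_D : ψ1 (D : Γ k m) = sr 2 := PresentedGroup.toGroup.of _
@[simp] lemma ψ2_B : ψ2 (B : Γ k m) = sr 0 := PresentedGroup.toGroup.of _
@[simp] lemma ψ2_C : ψ2 (C : Γ k m) = 1 := PresentedGroup.toGroup.of _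
@[simp] lemma ψ2_D : ψ2 (D : Γ k m) = sr 1 := PresentedGroup.toGroup.of _
@[simp] lemma ψ3_B : ψ3 (B : Γ k m) = 1 := PresentedGroup.toGroup.of _
@[simp] lemma ψ3_C : ψ3 (C : Γ k m) = -1 := PresentedGroup.toGroup.of _
@[simp] lemma ψ3_D : ψ3 (D : Γ k m) = 1 := PresentedGroup.toGroup.of _

lemma B_ne_one : (B : Γ k m) ≠ 1 := fun h => by simpa [one_def, -r_zero] using congrArg ψ1 h
lemma C_ne_one : (C : Γ k m) ≠ 1 := fun h => by simpa [one_def, -r_zero] using congrArg ψ1 h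
lemma D_ne_one : (D : Γ k m) ≠ 1 := fun h => by simpa [one_def, -r_zero] using congrArg ψ1 h

/-! ### Graph basics -/

def Sgen (k m : ℕ) : Set (Γ k m) := {B, C, D}

lemma gen_ne_one {s : Γ k m} (hs : s ∈ Sgen k m) : s ≠ 1 := by
  rcases hs with h | h | h <;> subst h
  exacts [B_ne_one, C_ne_one, D_ne_one]

lemma gen_inv {s : Γ k m} (hs : s ∈ Sgen k m) : s⁻¹ = s := by
  rcases hs with h | h | h <;> subst h
  exacts [B_inv, C_inv, D_inv]

lemma GV_eq : GV k m = cayley (Γ k m) (Sgen k m) := rfl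

lemma adj_mul_gen (x : Γ k m) {s : Γ k m} (hs : s ∈ Sgen k m) :
    (GV k m).Adj x (x * s) := by
  rw [GV_eq, cayley, SimpleGraph.fromRel_adj]
  refine ⟨fun h => gen_ne_one hs ?_, Or.inl (by simpa using hs)⟩
  exact mul_left_cancel (a := x) (by simpa using h.symm)

lemma adj_to_gen {x y : Γ k m} (h : (GV k m).Adj x y) :
    ∃ s ∈ Sgen k m, y = x * s := by
  rw [GV_eq, cayley, SimpleGraph.fromRel_adj] at h
  rcases h.2 with h' | h'
  · exact ⟨x⁻¹ * y, h', by group⟩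
  · refine ⟨y⁻¹ * x, h', ?_⟩
    conv_lhs => rw [show y = x * (y⁻¹ * x)⁻¹ by group]
    rw [gen_inv h']

/-- Left multiplication as a graph automorphism of the Cayley graph. -/
def mulLeftIso (a : Γ k m) : GV k m ≃g GV k m where
  toEquiv := Equiv.mulLeft a
  map_rel_iff' := by
    intro u v
    rw [GV_eq, cayley]
    simp [SimpleGraph.fromRel_adj, mul_assoc]

lemma reach_mul {u v : Γ k m} (a : Γ k m) (h : (GV k m).Reachable u v) :
    (GV k m).Reachable (a * u) (a * v) :=
  h.map (mulLeftIso a).toHom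

lemma GV_preconnected : (GV k m).Preconnected := by
  have h1 : ∀ g : Γ k m, (GV k m).Reachable 1 g := by
    have hsub : ∀ g : Γ k m, g ∈ (⊤ : Subgroup (Γ k m)) → (GV k m).Reachable 1 g := by
      intro g _
      refine PresentedGroup.generated_by (relsV k m)
        { carrier := {g : Γ k m | (GV k m).Reachable 1 g}
          one_mem' := Reachable.refl 1
          mul_mem' := by
            intro a b ha hb
            exact ha.trans (by simpa using reach_mul a hb)
          inv_mem' := by
            intro a ha
            have := reach_mul a⁻¹ ha
            simpa using this.symm } ?_ g
      intro j
      fin_cases j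
      · simpa [B] using (adj_mul_gen (1 : Γ k m) (show (B : Γ k m) ∈ Sgen k m by left; rfl)).reachable
      · simpa [C] using (adj_mul_gen (1 : Γ k m)
          (show (C : Γ k m) ∈ Sgen k m by right; left; rfl)).reachable
      · simpa [D] using (adj_mul_gen (1 : Γ k m)
          (show (D : Γ k m) ∈ Sgen k m by right; right; rfl)).reachable
    exact fun g => hsub g trivial
  exact fun u v => (h1 u).symm.trans (h1 v)

/-! ### Reachability in the graph with two vertices deleted -/

/-- Reachability in `GV k m` with the vertices `x` and `y` deleted. -/
def RC (x y u v : Γ k m) : Prop :=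
  ∃ (hu : u ∈ ({x, y}ᶜ : Set (Γ k m))) (hv : v ∈ ({x, y}ᶜ : Set (Γ k m))),
    ((GV k m).induce ({x, y}ᶜ : Set (Γ k m))).Reachable ⟨u, hu⟩ ⟨v, hv⟩

lemma RC.refl {x y u : Γ k m} (hu : u ∉ ({x, y} : Set (Γ k m))) : RC x y u u :=
  ⟨hu, hu, Reachable.refl _⟩

lemma RC.symm {x y u v : Γ k m} (h : RC x y u v) : RC x y v u :=
  ⟨h.2.1, h.1, h.2.2.symm⟩

lemma RC.trans {x y u v w : Γ k m} (h : RC x y u v) (h' : RC x y v w) : RC x y u w := by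
  obtain ⟨hu, hv, r⟩ := h
  obtain ⟨hv', hw, r'⟩ := h'
  exact ⟨hu, hw, r.trans (by convert r' using 2)⟩

lemma RC.step {x y u v w : Γ k m} (h : RC x y u v) (hw : w ∉ ({x, y} : Set (Γ k m)))
    (hadj : (GV k m).Adj v w) : RC x y u w := by
  obtain ⟨hu, hv, r⟩ := h
  refine ⟨hu, hw, r.trans (Adj.reachable ?_)⟩
  simpa [SimpleGraph.comap_adj] using hadj

lemma RC.stepg {x y u v : Γ k m} {s : Γ k m} (h : RC x y u v) (hs : s ∈ Sgen k m)
    (hw : v * s ∉ ({x, y} : Set (Γ k m))) : RC x y u (v * s) :=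
  h.step hw (adj_mul_gen v hs)

lemma RC.mem_left {x y u v : Γ k m} (h : RC x y u v) : u ∉ ({x, y} : Set (Γ k m)) := h.1
lemma RC.mem_right {x y u v : Γ k m} (h : RC x y u v) : v ∉ ({x, y} : Set (Γ k m)) := h.2.1

/-- Any vertex outside `{x,y}` can reach, avoiding `{x,y}`, a vertex adjacent
to `x` or to `y`. -/
lemma reach_nbr (x y : Γ k m) :
    ∀ {u : Γ k m}, (GV k m).Walk u x → u ∈ ({x, y}ᶜ : Set (Γ k m)) →
      ∃ a : Γ k m, ((GV k m).Adj a x ∨ (GV k m).Adj a y) ∧ RC x y u a := by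
  intro u w
  induction w with
  | nil =>
    intro hu
    simp [Set.mem_compl_iff] at hu
  | @cons u b x h p ih =>
    intro hu
    by_cases hbx : b = x
    · exact ⟨u, Or.inl (hbx ▸ h), RC.refl hu⟩
    · by_cases hby : b = y
      · exact ⟨u, Or.inr (hby ▸ h), RC.refl hu⟩
      · have hb : b ∈ ({x, y}ᶜ : Set (Γ k m)) := by simp [hbx, hby]
        obtain ⟨a, ha, hr⟩ := ih hb
        refine ⟨a, ha, RC.trans ⟨hu, hb, Adj.reachable ?_⟩ hr⟩
        simpa [SimpleGraph.comap_adj] using h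

/-! ### Arc lemmas -/

lemma xmul_notmem {x s w : Γ k m} (h1 : w ≠ 1) (h2 : w ≠ s) :
    x * w ∉ ({x, x * s} : Set (Γ k m)) := by
  simp only [Set.mem_insert_iff, Set.mem_singleton_iff]
  push_neg
  exact ⟨fun h => h1 (mul_left_cancel (a := x) (by simpa using h)),
    fun h => h2 (mul_left_cancel h)⟩

lemma shift_ne {g w v : Γ k m} (hgg : g * g = 1) (h : w ≠ g * v) : g * w ≠ v := by
  intro he
  exact h (by rw [← he, ← mul_assoc, hgg, one_mul])

lemma arc2 {x y u g h : Γ k m} (hg : g ∈ Sgen k m) (hh : h ∈ Sgen k m) :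
    ∀ i : ℕ, (∀ j ≤ i, u * (g * h) ^ j ∉ ({x, y} : Set (Γ k m))) →
      (∀ j < i, u * (g * h) ^ j * g ∉ ({x, y} : Set (Γ k m))) →
      RC x y u (u * (g * h) ^ i)
  | 0, c1, _ => by simpa using RC.refl (by simpa using c1 0 le_rfl)
  | (i + 1), c1, c2 => by
    have base := arc2 hg hh i (fun j hj => c1 j (by omega)) (fun j hj => c2 j (by omega))
    have e : u * (g * h) ^ (i + 1) = u * (g * h) ^ i * g * h := by
      rw [pow_succ]; group
    have s1 := base.stepg hg (c2 i (by omega))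
    have s2 := s1.stepg hh (by rw [← e]; exact c1 (i + 1) le_rfl)
    rwa [e]

lemma arc4 {x y u g1 g2 g3 g4 : Γ k m} (hg1 : g1 ∈ Sgen k m) (hg2 : g2 ∈ Sgen k m)
    (hg3 : g3 ∈ Sgen k m) (hg4 : g4 ∈ Sgen k m) :
    ∀ i : ℕ,
      (∀ j ≤ i, u * (g1 * g2 * g3 * g4) ^ j ∉ ({x, y} : Set (Γ k m))) →
      (∀ j < i, u * (g1 * g2 * g3 * g4) ^ j * g1 ∉ ({x, y} : Set (Γ k m))) →
      (∀ j < i, u * (g1 * g2 * g3 * g4) ^ j * g1 * g2 ∉ ({x, y} : Set (Γ k m))) →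
      (∀ j < i, u * (g1 * g2 * g3 * g4) ^ j * g1 * g2 * g3 ∉ ({x, y} : Set (Γ k m))) →
      RC x y u (u * (g1 * g2 * g3 * g4) ^ i)
  | 0, c1, _, _, _ => by simpa using RC.refl (by simpa using c1 0 le_rfl)
  | (i + 1), c1, c2, c3, c4 => by
    have base := arc4 hg1 hg2 hg3 hg4 i (fun j hj => c1 j (by omega))
      (fun j hj => c2 j (by omega)) (fun j hj => c3 j (by omega)) (fun j hj => c4 j (by omega))
    have e : u * (g1 * g2 * g3 * g4) ^ (i + 1) =
        u * (g1 * g2 * g3 * g4) ^ i * g1 * g2 * g3 * g4 := by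
      rw [pow_succ]; group
    have s1 := base.stepg hg1 (c2 i (by omega))
    have s2 := s1.stepg hg2 (c3 i (by omega))
    have s3 := s2.stepg hg3 (c4 i (by omega))
    have s4 := s3.stepg hg4 (by rw [← e]; exact c1 (i + 1) le_rfl)
    rwa [e]

/-! ### Computations in the dihedral groups -/

lemma r_neg_one_pow {n : ℕ} (j : ℕ) : (r (-1) : DihedralGroup n) ^ j = r (-(j : ZMod n)) := by
  induction j with
  | zero => simp [one_def, -r_zero]
  | succ i ih =>
    rw [pow_succ, ih, r_mul_r]
    push_cast
    ring_nf

lemma sr_zero_pow_even {n : ℕ} {j : ℕ} (hj : Even j) : (sr 0 : DihedralGroup n) ^ j = 1 := by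
  obtain ⟨t, rfl⟩ := hj
  rw [show t + t = 2 * t by ring, pow_mul, sq, sr_mul_sr]
  simp [← one_def]

lemma cast_ne_zero {n a : ℕ} (h0 : 0 < a) (h : a < n) : (a : ZMod n) ≠ 0 := by
  rw [Ne, ZMod.natCast_eq_zero_iff]
  intro hd
  have := Nat.le_of_dvd h0 hd
  omega

/-! ### Images of standard words -/

lemma ψ1_BC_pow (j : ℕ) : ψ1 (((B : Γ k m) * C) ^ j) = r j := by
  rw [map_pow, map_mul, ψ1_B, ψ1_C, sr_mul_sr]
  norm_num

lemma ψ1_CB_pow (j : ℕ) : ψ1 (((C : Γ k m) * B) ^ j) = r (-(j : ZMod (2 * k))) := by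
  rw [map_pow, map_mul, ψ1_C, ψ1_B, sr_mul_sr, zero_sub, r_neg_one_pow]

lemma ψ2_CB_pow (j : ℕ) : ψ2 (((C : Γ k m) * B) ^ j) = (sr 0) ^ j := by
  rw [map_pow, map_mul, ψ2_C, ψ2_B, one_mul]

lemma ψ3_CB_pow (j : ℕ) : ψ3 (((C : Γ k m) * B) ^ j) = (-1) ^ j := by
  rw [map_pow, map_mul, ψ3_C, ψ3_B, mul_one]

lemma ψ1_CBCD : ψ1 ((C : Γ k m) * B * C * D) = 1 := by
  rw [map_mul, map_mul, map_mul, ψ1_B, ψ1_C, ψ1_D, one_def]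
  norm_num

lemma ψ2_CBCD_pow (j : ℕ) : ψ2 (((C : Γ k m) * B * C * D) ^ j) = r j := by
  rw [map_pow, map_mul, map_mul, map_mul, ψ2_B, ψ2_C, ψ2_D, one_mul, mul_one, sr_mul_sr]
  norm_num

lemma ψ3_CBCD_pow (j : ℕ) : ψ3 (((C : Γ k m) * B * C * D) ^ j) = 1 := by
  rw [map_pow, map_mul, map_mul, map_mul, ψ3_B, ψ3_C, ψ3_D]
  norm_num

lemma ψ1_BCDC : ψ1 ((B : Γ k m) * C * D * C) = 1 := by
  rw [map_mul, map_mul, map_mul, ψ1_B, ψ1_C, ψ1_D, one_def]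
  norm_num

lemma ψ2_BCDC_pow (j : ℕ) : ψ2 (((B : Γ k m) * C * D * C) ^ j) = r j := by
  rw [map_pow, map_mul, map_mul, map_mul, ψ2_B, ψ2_C, ψ2_D]
  norm_num

lemma ψ3_BCDC_pow (j : ℕ) : ψ3 (((B : Γ k m) * C * D * C) ^ j) = 1 := by
  rw [map_pow, map_mul, map_mul, map_mul, ψ3_B, ψ3_C, ψ3_D]
  norm_num

/-! ### Cancellation identities -/

lemma B_B (w : Γ k m) : B * (B * w) = w := by rw [← mul_assoc, B_mul_B, one_mul]
lemma C_C (w : Γ k m) : C * (C * w) = w := by rw [← mul_assoc, C_mul_C, one_mul]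
lemma D_D (w : Γ k m) : D * (D * w) = w := by rw [← mul_assoc, D_mul_D, one_mul]

lemma CB_pow : ((C : Γ k m) * B) ^ (2 * k) = 1 := by
  have h : ((C : Γ k m) * B) = ((B : Γ k m) * C)⁻¹ := by
    rw [mul_inv_rev, B_inv, C_inv]
  rw [h, inv_pow, BC_pow, inv_one]

lemma BC_pow_sub (hk : 2 ≤ k) : ((B : Γ k m) * C) ^ (2 * k - 2) = C * (B * (C * B)) := by
  have hp : (((B : Γ k m) * C) ^ 2) * ((B * C) ^ (2 * k - 2)) = 1 := by
    rw [← pow_add, show 2 + (2 * k - 2) = 2 * k from by omega]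
    exact BC_pow
  rw [← inv_eq_of_mul_eq_one_right hp, pow_two, mul_inv_rev, mul_inv_rev, B_inv, C_inv]
  simp only [mul_assoc]

lemma CB_pow_sub (hk : 2 ≤ k) : ((C : Γ k m) * B) ^ (2 * k - 2) = B * (C * (B * C)) := by
  have hp : (((C : Γ k m) * B) ^ 2) * ((C * B) ^ (2 * k - 2)) = 1 := by
    rw [← pow_add, show 2 + (2 * k - 2) = 2 * k from by omega]
    exact CB_pow
  rw [← inv_eq_of_mul_eq_one_right hp, pow_two, mul_inv_rev, mul_inv_rev, B_inv, C_inv]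
  simp only [mul_assoc]

lemma CB_pow_sub1 (hk : 2 ≤ k) : ((C : Γ k m) * B) ^ (2 * k - 1) = B * C := by
  have hp : (((C : Γ k m) * B)) * ((C * B) ^ (2 * k - 1)) = 1 := by
    rw [← pow_succ', show 2 * k - 1 + 1 = 2 * k from by omega]
    exact CB_pow
  rw [← inv_eq_of_mul_eq_one_right hp, mul_inv_rev, B_inv, C_inv]

lemma CBCD_pow_sub (hm : 2 ≤ m) :
    ((C : Γ k m) * B * C * D) ^ (m - 1) = D * (C * (B * C)) := by
  have hp : ((C : Γ k m) * B * C * D) * ((C * B * C * D) ^ (m - 1)) = 1 := by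
    rw [← pow_succ', show m - 1 + 1 = m from by omega]
    exact CBCD_pow
  rw [← inv_eq_of_mul_eq_one_right hp, mul_inv_rev, mul_inv_rev, mul_inv_rev,
    B_inv, C_inv, D_inv]

lemma conjpow {G : Type*} [Group G] (a b : G) (n : ℕ) :
    (a * b * a⁻¹) ^ n = a * b ^ n * a⁻¹ := by
  induction n with
  | zero => simp
  | succ i ih => rw [pow_succ, ih, pow_succ]; group

lemma BCDC_pow : ((B : Γ k m) * C * D * C) ^ m = 1 := by
  have h : ((B : Γ k m) * C * D * C) = (C * (C * B * C * D) * C⁻¹) := by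
    rw [C_inv]
    simp only [mul_assoc, C_C]
  rw [h, conjpow, CBCD_pow, mul_one, C_inv, C_mul_C]

lemma BCDC_pow_sub (hm : 2 ≤ m) :
    ((B : Γ k m) * C * D * C) ^ (m - 1) = C * (D * (C * B)) := by
  have hp : ((B : Γ k m) * C * D * C) * ((B * C * D * C) ^ (m - 1)) = 1 := by
    rw [← pow_succ', show m - 1 + 1 = m from by omega]
    exact BCDC_pow
  rw [← inv_eq_of_mul_eq_one_right hp, mul_inv_rev, mul_inv_rev, mul_inv_rev,
    B_inv, C_inv, D_inv]

lemma E1 (hk : 2 ≤ k) : (C : Γ k m) * ((B * C) ^ (2 * k - 2) * B) = B * C := by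
  rw [BC_pow_sub hk]
  simp only [mul_assoc, B_B, C_C, D_D, B_mul_B, C_mul_C, D_mul_D, mul_one, one_mul]

lemma E2 (hk : 2 ≤ k) : (B : Γ k m) * ((C * B) ^ (2 * k - 2) * C) = C * B := by
  rw [CB_pow_sub hk]
  simp only [mul_assoc, B_B, C_C, D_D, B_mul_B, C_mul_C, D_mul_D, mul_one, one_mul]

lemma E3 (hk : 2 ≤ k) : (B : Γ k m) * (C * B) ^ (2 * k - 1) = C := by
  rw [CB_pow_sub1 hk, B_B]

lemma E4 (hm : 2 ≤ m) : (D : Γ k m) * ((C * B * C * D) ^ (m - 1) * (C * B)) = C := by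
  rw [CBCD_pow_sub hm]
  simp only [mul_assoc, B_B, C_C, D_D, B_mul_B, C_mul_C, D_mul_D, mul_one, one_mul]

lemma E5 (hm : 2 ≤ m) : (D : Γ k m) * ((C * B * C * D) ^ (m - 1) * C) = C * B := by
  rw [CBCD_pow_sub hm]
  simp only [mul_assoc, B_B, C_C, D_D, B_mul_B, C_mul_C, D_mul_D, mul_one, one_mul]

lemma E6 (hm : 2 ≤ m) : (C : Γ k m) * ((B * C * D * C) ^ (m - 1) * B) = D * C := by
  rw [BCDC_pow_sub hm]
  simp only [mul_assoc, B_B, C_C, D_D, B_mul_B, C_mul_C, D_mul_D, mul_one, one_mul]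

lemma ψ1_CBCD_pow (j : ℕ) : ψ1 (((C : Γ k m) * B * C * D) ^ j) = 1 := by
  rw [map_pow, ψ1_CBCD, one_pow]

lemma ψ1_BCDC_pow (j : ℕ) : ψ1 (((B : Γ k m) * C * D * C) ^ j) = 1 := by
  rw [map_pow, ψ1_BCDC, one_pow]

lemma zmod_cast_ne {n j : ℕ} (h0 : 0 < j) (h : j < n) : (j : ZMod n) ≠ 0 :=
  cast_ne_zero h0 h

lemma zmod_add_one_ne {n j : ℕ} (h : j + 1 < n) : (j : ZMod n) + 1 ≠ 0 := by
  intro hh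
  apply cast_ne_zero (n := n) (a := j + 1) (by omega) h
  push_cast
  linear_combination hh

lemma zmod_one_add_ne {n j : ℕ} (h : j + 1 < n) : 1 + (j : ZMod n) ≠ 0 := by
  rw [add_comm]; exact zmod_add_one_ne h

lemma zmod_neg_ne_one {n j : ℕ} (h : j + 1 < n) : -(j : ZMod n) ≠ 1 := by
  intro hh
  exact zmod_add_one_ne h (by linear_combination -hh)

/-! ### Word facts -/

lemma W1 (hk : 2 ≤ k) {j : ℕ} (hj : j ≤ 2 * k - 2) :
    (C : Γ k m) * (B * C) ^ j ≠ 1 ∧ (C : Γ k m) * (B * C) ^ j ≠ B := by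
  constructor <;> intro h <;> have h' := congrArg ψ1 h <;>
    simp only [map_mul, map_one, ψ1_C, ψ1_B, ψ1_BC_pow, one_def, sr_mul_r] at h' <;>
    simp only [sr.injEq, reduceCtorEq] at h'
  exact zmod_one_add_ne (n := 2 * k) (j := j) (by omega) (by linear_combination h')

lemma W2 (hk : 2 ≤ k) {j : ℕ} (hj : j ≤ 2 * k - 2) :
    (C : Γ k m) * ((B * C) ^ j * B) ≠ 1 ∧ (C : Γ k m) * ((B * C) ^ j * B) ≠ B := by
  constructor <;> intro h <;> have h' := congrArg ψ1 h <;>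
    simp only [map_mul, map_one, ψ1_C, ψ1_B, ψ1_BC_pow, one_def, r_mul_sr, sr_mul_sr] at h' <;>
    simp only [r.injEq, reduceCtorEq] at h'
  exact zmod_add_one_ne (n := 2 * k) (j := j) (by omega) (by linear_combination -h')

lemma W3 (hk : 2 ≤ k) {j : ℕ} (hj : j ≤ 2 * k - 2) :
    (B : Γ k m) * (C * B) ^ j ≠ 1 ∧ (B : Γ k m) * (C * B) ^ j ≠ C := by
  constructor <;> intro h <;> have h' := congrArg ψ1 h <;>
    simp only [map_mul, map_one, ψ1_C, ψ1_B, ψ1_CB_pow, one_def, sr_mul_r] at h' <;>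
    simp only [sr.injEq, reduceCtorEq] at h'
  exact zmod_neg_ne_one (n := 2 * k) (j := j) (by omega) (by linear_combination h')

lemma W4 (hk : 2 ≤ k) {j : ℕ} (hj : j ≤ 2 * k - 2) :
    (B : Γ k m) * ((C * B) ^ j * C) ≠ 1 ∧ (B : Γ k m) * ((C * B) ^ j * C) ≠ C := by
  constructor <;> intro h <;> have h' := congrArg ψ1 h <;>
    simp only [map_mul, map_one, ψ1_C, ψ1_B, ψ1_CB_pow, one_def, r_mul_sr, sr_mul_sr,
      sr_mul_r] at h' <;>
    simp only [r.injEq, reduceCtorEq] at h'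
  exact zmod_add_one_ne (n := 2 * k) (j := j) (by omega) (by linear_combination h')

lemma W5 (hk : 2 ≤ k) (hm : 2 ≤ m) {j : ℕ} :
    (B : Γ k m) * (C * B) ^ j ≠ 1 ∧ (B : Γ k m) * (C * B) ^ j ≠ D := by
  constructor <;> intro h
  · have h' := congrArg ψ1 h
    simp only [map_mul, map_one, ψ1_B, ψ1_CB_pow, one_def, sr_mul_r, reduceCtorEq] at h'
  · rcases Nat.even_or_odd j with hev | hod
    · have h' := congrArg ψ2 h
      rw [map_mul, ψ2_B, ψ2_CB_pow, sr_zero_pow_even hev, mul_one, ψ2_D] at h'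
      simp only [sr.injEq] at h'
      exact zmod_cast_ne (n := m) (j := 1) (by omega) (by omega) (by linear_combination -h')
    · have h' := congrArg ψ3 h
      rw [map_mul, ψ3_B, ψ3_CB_pow, Odd.neg_one_pow hod, one_mul, ψ3_D] at h'
      exact absurd h' (by decide)

lemma W6 (hk : 2 ≤ k) {j : ℕ} (hj : j ≤ 2 * k - 2) :
    (B : Γ k m) * ((C * B) ^ j * C) ≠ 1 ∧ (B : Γ k m) * ((C * B) ^ j * C) ≠ D := by
  constructor <;> intro h <;> have h' := congrArg ψ1 h <;>
    simp only [map_mul, map_one, ψ1_C, ψ1_B, ψ1_D, ψ1_CB_pow, one_def, r_mul_sr, sr_mul_sr,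
      sr_mul_r] at h' <;>
    simp only [r.injEq, reduceCtorEq] at h'
  exact zmod_add_one_ne (n := 2 * k) (j := j) (by omega) (by linear_combination h')

lemma X1 (hk : 2 ≤ k) {j : ℕ} :
    (D : Γ k m) * (C * B * C * D) ^ j ≠ 1 ∧ (D : Γ k m) * (C * B * C * D) ^ j ≠ B := by
  constructor <;> intro h
  · have h' := congrArg ψ2 h
    simp only [map_mul, map_one, ψ2_D, ψ2_CBCD_pow, one_def, sr_mul_r, reduceCtorEq] at h'
  · have h' := congrArg ψ1 h
    simp only [map_mul, ψ1_D, ψ1_B, ψ1_CBCD_pow, mul_one, sr.injEq] at h'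
    exact zmod_cast_ne (n := 2 * k) (j := 2) (by omega) (by omega) (by linear_combination h')

lemma X2 {j : ℕ} :
    (D : Γ k m) * ((C * B * C * D) ^ j * C) ≠ 1 ∧ (D : Γ k m) * ((C * B * C * D) ^ j * C) ≠ B := by
  constructor <;> intro h <;> have h' := congrArg ψ3 h <;>
    simp only [map_mul, map_one, ψ3_D, ψ3_C, ψ3_B, ψ3_CBCD_pow, one_mul, mul_one] at h' <;>
    exact absurd h' (by decide)

lemma X3 {j : ℕ} :
    (D : Γ k m) * ((C * B * C * D) ^ j * (C * B)) ≠ 1 ∧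
      (D : Γ k m) * ((C * B * C * D) ^ j * (C * B)) ≠ B := by
  constructor <;> intro h <;> have h' := congrArg ψ3 h <;>
    simp only [map_mul, map_one, ψ3_D, ψ3_C, ψ3_B, ψ3_CBCD_pow, one_mul, mul_one] at h' <;>
    exact absurd h' (by decide)

lemma X4 (hm : 2 ≤ m) {j : ℕ} (hj : j ≤ m - 2) :
    (D : Γ k m) * ((C * B * C * D) ^ j * (C * (B * C))) ≠ 1 ∧
      (D : Γ k m) * ((C * B * C * D) ^ j * (C * (B * C))) ≠ B := by
  constructor <;> intro h
  · have h' := congrArg ψ2 h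
    simp only [map_mul, map_one, ψ2_D, ψ2_C, ψ2_B, ψ2_CBCD_pow, one_mul, mul_one, one_def,
      r_mul_sr, sr_mul_sr, sr_mul_r, r_mul_r, r.injEq] at h'
    exact zmod_add_one_ne (n := m) (j := j) (by omega) (by linear_combination -h')
  · have h' := congrArg ψ1 h
    simp only [map_mul, ψ1_D, ψ1_C, ψ1_B, ψ1_CBCD_pow, one_mul, mul_one, r_mul_sr, sr_mul_sr,
      sr_mul_r, r_mul_r, reduceCtorEq] at h'

lemma X1C {j : ℕ} :
    (D : Γ k m) * (C * B * C * D) ^ j ≠ 1 ∧ (D : Γ k m) * (C * B * C * D) ^ j ≠ C := by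
  constructor <;> intro h
  · have h' := congrArg ψ2 h
    simp only [map_mul, map_one, ψ2_D, ψ2_CBCD_pow, one_def, sr_mul_r, reduceCtorEq] at h'
  · have h' := congrArg ψ3 h
    simp only [map_mul, ψ3_D, ψ3_C, ψ3_CBCD_pow, one_mul, mul_one] at h'
    exact absurd h' (by decide)

lemma X2C {j : ℕ} :
    (D : Γ k m) * ((C * B * C * D) ^ j * C) ≠ 1 ∧
      (D : Γ k m) * ((C * B * C * D) ^ j * C) ≠ C := by
  constructor <;> intro h
  · have h' := congrArg ψ3 h
    simp only [map_mul, map_one, ψ3_D, ψ3_C, ψ3_CBCD_pow, one_mul, mul_one] at h'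
    exact absurd h' (by decide)
  · have h' := congrArg ψ2 h
    simp only [map_mul, ψ2_D, ψ2_C, ψ2_CBCD_pow, one_mul, mul_one, sr_mul_r, r_mul_r, one_def,
      reduceCtorEq] at h'

lemma X3C (hm : 2 ≤ m) {j : ℕ} (hj : j ≤ m - 2) :
    (D : Γ k m) * ((C * B * C * D) ^ j * (C * B)) ≠ 1 ∧
      (D : Γ k m) * ((C * B * C * D) ^ j * (C * B)) ≠ C := by
  constructor <;> intro h
  · have h' := congrArg ψ3 h
    simp only [map_mul, map_one, ψ3_D, ψ3_C, ψ3_B, ψ3_CBCD_pow, one_mul, mul_one] at h'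
    exact absurd h' (by decide)
  · have h' := congrArg ψ2 h
    simp only [map_mul, ψ2_D, ψ2_C, ψ2_B, ψ2_CBCD_pow, one_mul, mul_one, sr_mul_r, r_mul_sr,
      sr_mul_sr, r_mul_r, one_def, r.injEq] at h'
    exact zmod_add_one_ne (n := m) (j := j) (by omega) (by linear_combination -h')

lemma X4C (hm : 2 ≤ m) {j : ℕ} (hj : j ≤ m - 2) :
    (D : Γ k m) * ((C * B * C * D) ^ j * (C * (B * C))) ≠ 1 ∧
      (D : Γ k m) * ((C * B * C * D) ^ j * (C * (B * C))) ≠ C := by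
  constructor <;> intro h
  · have h' := congrArg ψ2 h
    simp only [map_mul, map_one, ψ2_D, ψ2_C, ψ2_B, ψ2_CBCD_pow, one_mul, mul_one, one_def,
      r_mul_sr, sr_mul_sr, sr_mul_r, r_mul_r, r.injEq] at h'
    exact zmod_add_one_ne (n := m) (j := j) (by omega) (by linear_combination -h')
  · have h' := congrArg ψ3 h
    simp only [map_mul, ψ3_D, ψ3_C, ψ3_B, ψ3_CBCD_pow, one_mul, mul_one] at h'
    exact absurd h' (by decide)

lemma Y1 {j : ℕ} :
    (C : Γ k m) * (B * C * D * C) ^ j ≠ 1 ∧ (C : Γ k m) * (B * C * D * C) ^ j ≠ D := by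
  constructor <;> intro h <;> have h' := congrArg ψ3 h <;>
    simp only [map_mul, map_one, ψ3_C, ψ3_D, ψ3_BCDC_pow, one_mul, mul_one] at h' <;>
    exact absurd h' (by decide)

lemma Y2 {j : ℕ} :
    (C : Γ k m) * ((B * C * D * C) ^ j * B) ≠ 1 ∧
      (C : Γ k m) * ((B * C * D * C) ^ j * B) ≠ D := by
  constructor <;> intro h <;> have h' := congrArg ψ3 h <;>
    simp only [map_mul, map_one, ψ3_C, ψ3_D, ψ3_B, ψ3_BCDC_pow, one_mul, mul_one] at h' <;>
    exact absurd h' (by decide)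

lemma Y3 (hm : 2 ≤ m) {j : ℕ} (hj : j ≤ m - 2) :
    (C : Γ k m) * ((B * C * D * C) ^ j * (B * C)) ≠ 1 ∧
      (C : Γ k m) * ((B * C * D * C) ^ j * (B * C)) ≠ D := by
  constructor <;> intro h <;> have h' := congrArg ψ2 h <;>
    simp only [map_mul, map_one, ψ2_C, ψ2_D, ψ2_B, ψ2_BCDC_pow, one_mul, mul_one, one_def,
      r_mul_sr, sr_mul_sr, sr_mul_r, r_mul_r, reduceCtorEq, sr.injEq] at h'
  exact zmod_neg_ne_one (n := m) (j := j) (by omega) (by linear_combination h')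

lemma Y4 (hm : 2 ≤ m) {j : ℕ} (hj : j ≤ m - 2) :
    (C : Γ k m) * ((B * C * D * C) ^ j * (B * (C * D))) ≠ 1 ∧
      (C : Γ k m) * ((B * C * D * C) ^ j * (B * (C * D))) ≠ D := by
  constructor <;> intro h <;> have h' := congrArg ψ2 h <;>
    simp only [map_mul, map_one, ψ2_C, ψ2_D, ψ2_B, ψ2_BCDC_pow, one_mul, mul_one, one_def,
      r_mul_sr, sr_mul_sr, sr_mul_r, r_mul_r, reduceCtorEq, r.injEq] at h'
  exact zmod_add_one_ne (n := m) (j := j) (by omega) (by linear_combination h')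

lemma asc4' (x b d p c e : Γ k m) : x * (b * d) * p * c * e = x * (b * (d * (p * (c * e)))) := by
  simp only [mul_assoc]

lemma asc3' (x b d p c : Γ k m) : x * (b * d) * p * c = x * (b * (d * (p * c))) := by
  simp only [mul_assoc]

lemma asc2' (x b d p : Γ k m) : x * (b * d) * p = x * (b * (d * p)) := by
  simp only [mul_assoc]

lemma sB : (B : Γ k m) ∈ Sgen k m := by simp [Sgen]
lemma sC : (C : Γ k m) ∈ Sgen k m := by simp [Sgen]
lemma sD : (D : Γ k m) ∈ Sgen k m := by simp [Sgen]

lemma hubB (hk : 2 ≤ k) (hm : 2 ≤ m) (x : Γ k m) :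
    RC x (x * B) (x * C) (x * (B * C)) ∧ RC x (x * B) (x * D) (x * C) ∧
      RC x (x * B) (x * (B * D)) (x * (B * C)) := by
  refine ⟨?_, ?_, ?_⟩
  · have c1 : ∀ j ≤ 2 * k - 2, x * C * (B * C) ^ j ∉ ({x, x * B} : Set (Γ k m)) := by
      intro j hj
      rw [mul_assoc]
      exact xmul_notmem (W1 hk hj).1 (W1 hk hj).2
    have c2 : ∀ j ≤ 2 * k - 2, x * C * (B * C) ^ j * B ∉ ({x, x * B} : Set (Γ k m)) := by
      intro j hj
      rw [mul_assoc, mul_assoc]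
      exact xmul_notmem (W2 hk hj).1 (W2 hk hj).2
    have base := arc2 sB sC (2 * k - 2) c1 (fun j hj => c2 j (by omega))
    have s1 := base.stepg sB (c2 (2 * k - 2) le_rfl)
    rwa [show x * C * (B * C) ^ (2 * k - 2) * B = x * (B * C) from by
      rw [mul_assoc, mul_assoc, E1 hk]] at s1
  · have c1 : ∀ j ≤ m - 1, x * D * (C * B * C * D) ^ j ∉ ({x, x * B} : Set (Γ k m)) := by
      intro j hj
      rw [mul_assoc]
      exact xmul_notmem (X1 hk).1 (X1 hk).2
    have c2 : ∀ j ≤ m - 1, x * D * (C * B * C * D) ^ j * C ∉ ({x, x * B} : Set (Γ k m)) := by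
      intro j hj
      rw [mul_assoc, mul_assoc]
      exact xmul_notmem X2.1 X2.2
    have c3 : ∀ j ≤ m - 1, x * D * (C * B * C * D) ^ j * C * B ∉ ({x, x * B} : Set (Γ k m)) := by
      intro j hj
      rw [mul_assoc, mul_assoc, mul_assoc]
      exact xmul_notmem X3.1 X3.2
    have c4 : ∀ j ≤ m - 2, x * D * (C * B * C * D) ^ j * C * B * C
        ∉ ({x, x * B} : Set (Γ k m)) := by
      intro j hj
      rw [mul_assoc, mul_assoc, mul_assoc, mul_assoc]
      exact xmul_notmem (X4 hm hj).1 (X4 hm hj).2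
    have base := arc4 sC sB sC sD (m - 1) c1 (fun j hj => c2 j (by omega))
      (fun j hj => c3 j (by omega)) (fun j hj => c4 j (by omega))
    have s1 := base.stepg sC (c2 (m - 1) le_rfl)
    have s2 := s1.stepg sB (c3 (m - 1) le_rfl)
    rwa [show x * D * (C * B * C * D) ^ (m - 1) * C * B = x * C from by
      rw [mul_assoc, mul_assoc, mul_assoc, E4 hm]] at s2
  · have c1 : ∀ j ≤ m - 1, x * (B * D) * (C * B * C * D) ^ j
        ∉ ({x, x * B} : Set (Γ k m)) := by
      intro j hj
      simp only [mul_assoc]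
      exact xmul_notmem (shift_ne B_mul_B (by rw [mul_one]; exact (X1 hk).2))
        (shift_ne B_mul_B (by rw [B_mul_B]; exact (X1 hk).1))
    have c2 : ∀ j ≤ m - 1, x * (B * D) * (C * B * C * D) ^ j * C
        ∉ ({x, x * B} : Set (Γ k m)) := by
      intro j hj
      simp only [mul_assoc]
      exact xmul_notmem (shift_ne B_mul_B (by rw [mul_one]; exact X2.2))
        (shift_ne B_mul_B (by rw [B_mul_B]; exact X2.1))
    have c3 : ∀ j ≤ m - 1, x * (B * D) * (C * B * C * D) ^ j * C * B
        ∉ ({x, x * B} : Set (Γ k m)) := by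
      intro j hj
      simp only [mul_assoc]
      exact xmul_notmem (shift_ne B_mul_B (by rw [mul_one]; exact X3.2))
        (shift_ne B_mul_B (by rw [B_mul_B]; exact X3.1))
    have c4 : ∀ j ≤ m - 2, x * (B * D) * (C * B * C * D) ^ j * C * B * C
        ∉ ({x, x * B} : Set (Γ k m)) := by
      intro j hj
      simp only [mul_assoc]
      exact xmul_notmem (shift_ne B_mul_B (by rw [mul_one]; exact (X4 hm hj).2))
        (shift_ne B_mul_B (by rw [B_mul_B]; exact (X4 hm hj).1))
    have base := arc4 sC sB sC sD (m - 1) c1 (fun j hj => c2 j (by omega))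
      (fun j hj => c3 j (by omega)) (fun j hj => c4 j (by omega))
    have s1 := base.stepg sC (c2 (m - 1) le_rfl)
    have s2 := s1.stepg sB (c3 (m - 1) le_rfl)
    rwa [show x * (B * D) * (C * B * C * D) ^ (m - 1) * C * B = x * (B * C) from by
      rw [asc4', show (D : Γ k m) * ((C * B * C * D) ^ (m - 1) * (C * B)) = C from E4 hm]] at s2

lemma hubC (hk : 2 ≤ k) (hm : 2 ≤ m) (x : Γ k m) :
    RC x (x * C) (x * B) (x * (C * B)) ∧ RC x (x * C) (x * D) (x * (C * B)) ∧
      RC x (x * C) (x * (C * D)) (x * B) := by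
  refine ⟨?_, ?_, ?_⟩
  · have c1 : ∀ j ≤ 2 * k - 2, x * B * (C * B) ^ j ∉ ({x, x * C} : Set (Γ k m)) := by
      intro j hj
      rw [mul_assoc]
      exact xmul_notmem (W3 hk hj).1 (W3 hk hj).2
    have c2 : ∀ j ≤ 2 * k - 2, x * B * (C * B) ^ j * C ∉ ({x, x * C} : Set (Γ k m)) := by
      intro j hj
      rw [mul_assoc, mul_assoc]
      exact xmul_notmem (W4 hk hj).1 (W4 hk hj).2
    have base := arc2 sC sB (2 * k - 2) c1 (fun j hj => c2 j (by omega))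
    have s1 := base.stepg sC (c2 (2 * k - 2) le_rfl)
    rwa [show x * B * (C * B) ^ (2 * k - 2) * C = x * (C * B) from by
      rw [mul_assoc, mul_assoc, E2 hk]] at s1
  · have c1 : ∀ j ≤ m - 1, x * D * (C * B * C * D) ^ j ∉ ({x, x * C} : Set (Γ k m)) := by
      intro j hj
      rw [mul_assoc]
      exact xmul_notmem X1C.1 X1C.2
    have c2 : ∀ j ≤ m - 1, x * D * (C * B * C * D) ^ j * C ∉ ({x, x * C} : Set (Γ k m)) := by
      intro j hj
      rw [mul_assoc, mul_assoc]
      exact xmul_notmem X2C.1 X2C.2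
    have c3 : ∀ j ≤ m - 2, x * D * (C * B * C * D) ^ j * C * B ∉ ({x, x * C} : Set (Γ k m)) := by
      intro j hj
      rw [mul_assoc, mul_assoc, mul_assoc]
      exact xmul_notmem (X3C hm hj).1 (X3C hm hj).2
    have c4 : ∀ j ≤ m - 2, x * D * (C * B * C * D) ^ j * C * B * C
        ∉ ({x, x * C} : Set (Γ k m)) := by
      intro j hj
      rw [mul_assoc, mul_assoc, mul_assoc, mul_assoc]
      exact xmul_notmem (X4C hm hj).1 (X4C hm hj).2
    have base := arc4 sC sB sC sD (m - 1) c1 (fun j hj => c2 j (by omega))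
      (fun j hj => c3 j (by omega)) (fun j hj => c4 j (by omega))
    have s1 := base.stepg sC (c2 (m - 1) le_rfl)
    rwa [show x * D * (C * B * C * D) ^ (m - 1) * C = x * (C * B) from by
      rw [mul_assoc, mul_assoc, E5 hm]] at s1
  · have c1 : ∀ j ≤ m - 1, x * (C * D) * (C * B * C * D) ^ j
        ∉ ({x, x * C} : Set (Γ k m)) := by
      intro j hj
      rw [asc2']
      exact xmul_notmem (shift_ne C_mul_C (by rw [mul_one]; exact X1C.2))
        (shift_ne C_mul_C (by rw [C_mul_C]; exact X1C.1))
    have c2 : ∀ j ≤ m - 1, x * (C * D) * (C * B * C * D) ^ j * C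
        ∉ ({x, x * C} : Set (Γ k m)) := by
      intro j hj
      rw [asc3']
      exact xmul_notmem (shift_ne C_mul_C (by rw [mul_one]; exact X2C.2))
        (shift_ne C_mul_C (by rw [C_mul_C]; exact X2C.1))
    have c3 : ∀ j ≤ m - 2, x * (C * D) * (C * B * C * D) ^ j * C * B
        ∉ ({x, x * C} : Set (Γ k m)) := by
      intro j hj
      rw [asc4']
      exact xmul_notmem (shift_ne C_mul_C (by rw [mul_one]; exact (X3C hm hj).2))
        (shift_ne C_mul_C (by rw [C_mul_C]; exact (X3C hm hj).1))
    have c4 : ∀ j ≤ m - 2, x * (C * D) * (C * B * C * D) ^ j * C * B * C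
        ∉ ({x, x * C} : Set (Γ k m)) := by
      intro j hj
      rw [show x * (C * D) * (C * B * C * D) ^ j * C * B * C =
        x * (C * (D * ((C * B * C * D) ^ j * (C * (B * C))))) from by simp only [mul_assoc]]
      exact xmul_notmem (shift_ne C_mul_C (by rw [mul_one]; exact (X4C hm hj).2))
        (shift_ne C_mul_C (by rw [C_mul_C]; exact (X4C hm hj).1))
    have base := arc4 sC sB sC sD (m - 1) c1 (fun j hj => c2 j (by omega))
      (fun j hj => c3 j (by omega)) (fun j hj => c4 j (by omega))
    have s1 := base.stepg sC (c2 (m - 1) le_rfl)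
    rwa [show x * (C * D) * (C * B * C * D) ^ (m - 1) * C = x * B from by
      rw [asc3', show (D : Γ k m) * ((C * B * C * D) ^ (m - 1) * C) = C * B from E5 hm, C_C]]
      at s1

lemma hubD (hk : 2 ≤ k) (hm : 2 ≤ m) (x : Γ k m) :
    RC x (x * D) (x * B) (x * C) ∧ RC x (x * D) (x * (D * B)) (x * (D * C)) ∧
      RC x (x * D) (x * C) (x * (D * C)) := by
  refine ⟨?_, ?_, ?_⟩
  · have c1 : ∀ j ≤ 2 * k - 1, x * B * (C * B) ^ j ∉ ({x, x * D} : Set (Γ k m)) := by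
      intro j hj
      rw [mul_assoc]
      exact xmul_notmem (W5 hk hm).1 (W5 hk hm).2
    have c2 : ∀ j ≤ 2 * k - 2, x * B * (C * B) ^ j * C ∉ ({x, x * D} : Set (Γ k m)) := by
      intro j hj
      rw [mul_assoc, mul_assoc]
      exact xmul_notmem (W6 hk hj).1 (W6 hk hj).2
    have base := arc2 sC sB (2 * k - 1) c1 (fun j hj => c2 j (by omega))
    rwa [show x * B * (C * B) ^ (2 * k - 1) = x * C from by
      rw [mul_assoc, E3 hk]] at base
  · have c1 : ∀ j ≤ 2 * k - 1, x * (D * B) * (C * B) ^ j ∉ ({x, x * D} : Set (Γ k m)) := by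
      intro j hj
      rw [asc2']
      exact xmul_notmem (shift_ne D_mul_D (by rw [mul_one]; exact (W5 hk hm).2))
        (shift_ne D_mul_D (by rw [D_mul_D]; exact (W5 hk hm).1))
    have c2 : ∀ j ≤ 2 * k - 2, x * (D * B) * (C * B) ^ j * C ∉ ({x, x * D} : Set (Γ k m)) := by
      intro j hj
      rw [asc3']
      exact xmul_notmem (shift_ne D_mul_D (by rw [mul_one]; exact (W6 hk hj).2))
        (shift_ne D_mul_D (by rw [D_mul_D]; exact (W6 hk hj).1))
    have base := arc2 sC sB (2 * k - 1) c1 (fun j hj => c2 j (by omega))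
    rwa [show x * (D * B) * (C * B) ^ (2 * k - 1) = x * (D * C) from by
      rw [asc2', show (B : Γ k m) * (C * B) ^ (2 * k - 1) = C from E3 hk]] at base
  · have c1 : ∀ j ≤ m - 1, x * C * (B * C * D * C) ^ j ∉ ({x, x * D} : Set (Γ k m)) := by
      intro j hj
      rw [mul_assoc]
      exact xmul_notmem Y1.1 Y1.2
    have c2 : ∀ j ≤ m - 1, x * C * (B * C * D * C) ^ j * B ∉ ({x, x * D} : Set (Γ k m)) := by
      intro j hj
      rw [mul_assoc, mul_assoc]
      exact xmul_notmem Y2.1 Y2.2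
    have c3 : ∀ j ≤ m - 2, x * C * (B * C * D * C) ^ j * B * C
        ∉ ({x, x * D} : Set (Γ k m)) := by
      intro j hj
      rw [mul_assoc, mul_assoc, mul_assoc]
      exact xmul_notmem (Y3 hm hj).1 (Y3 hm hj).2
    have c4 : ∀ j ≤ m - 2, x * C * (B * C * D * C) ^ j * B * C * D
        ∉ ({x, x * D} : Set (Γ k m)) := by
      intro j hj
      rw [mul_assoc, mul_assoc, mul_assoc, mul_assoc]
      exact xmul_notmem (Y4 hm hj).1 (Y4 hm hj).2
    have base := arc4 sB sC sD sC (m - 1) c1 (fun j hj => c2 j (by omega))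
      (fun j hj => c3 j (by omega)) (fun j hj => c4 j (by omega))
    have s1 := base.stepg sB (c2 (m - 1) le_rfl)
    rwa [show x * C * (B * C * D * C) ^ (m - 1) * B = x * (D * C) from by
      rw [mul_assoc, mul_assoc, E6 hm]] at s1

lemma candidates (hk : 2 ≤ k) (hm : 2 ≤ m) (x s : Γ k m) (hs : s ∈ Sgen k m) :
    ∃ h0 : Γ k m, ∀ a : Γ k m, a ∉ ({x, x * s} : Set (Γ k m)) →
      ((GV k m).Adj a x ∨ (GV k m).Adj a (x * s)) → RC x (x * s) a h0 := by
  rcases hs with h | h | h <;> subst h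
  · refine ⟨x * C, fun a ha hadj => ?_⟩
    rcases hadj with h | h
    · obtain ⟨t, ht, rfl⟩ := adj_to_gen h.symm
      rcases ht with h1 | h1 | h1 <;> subst h1
      · exact absurd (Set.mem_insert_iff.mpr (Or.inr rfl)) ha
      · exact RC.refl ha
      · exact (hubB hk hm x).2.1
    · obtain ⟨t, ht, rfl⟩ := adj_to_gen h.symm
      rcases ht with h1 | h1 | h1 <;> subst h1
      · refine absurd ?_ ha
        rw [mul_assoc, B_mul_B, mul_one]
        exact Set.mem_insert _ _
      · rw [mul_assoc x B C] at ha ⊢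
        exact (hubB hk hm x).1.symm
      · rw [mul_assoc x B D] at ha ⊢
        exact (hubB hk hm x).2.2.trans (hubB hk hm x).1.symm
  · refine ⟨x * (C * B), fun a ha hadj => ?_⟩
    rcases hadj with h | h
    · obtain ⟨t, ht, rfl⟩ := adj_to_gen h.symm
      rcases ht with h1 | h1 | h1 <;> subst h1
      · exact (hubC hk hm x).1
      · exact absurd (Set.mem_insert_iff.mpr (Or.inr rfl)) ha
      · exact (hubC hk hm x).2.1
    · obtain ⟨t, ht, rfl⟩ := adj_to_gen h.symm
      rcases ht with h1 | h1 | h1 <;> subst h1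
      · rw [mul_assoc x C B] at ha ⊢
        exact RC.refl ha
      · refine absurd ?_ ha
        rw [mul_assoc, C_mul_C, mul_one]
        exact Set.mem_insert _ _
      · rw [mul_assoc x C D] at ha ⊢
        exact (hubC hk hm x).2.2.trans (hubC hk hm x).1
  · refine ⟨x * (D * C), fun a ha hadj => ?_⟩
    rcases hadj with h | h
    · obtain ⟨t, ht, rfl⟩ := adj_to_gen h.symm
      rcases ht with h1 | h1 | h1 <;> subst h1
      · exact (hubD hk hm x).1.trans (hubD hk hm x).2.2
      · exact (hubD hk hm x).2.2
      · exact absurd (Set.mem_insert_iff.mpr (Or.inr rfl)) ha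
    · obtain ⟨t, ht, rfl⟩ := adj_to_gen h.symm
      rcases ht with h1 | h1 | h1 <;> subst h1
      · rw [mul_assoc x D B] at ha ⊢
        exact (hubD hk hm x).2.1
      · rw [mul_assoc x D C] at ha ⊢
        exact RC.refl ha
      · refine absurd ?_ ha
        rw [mul_assoc, D_mul_D, mul_one]
        exact Set.mem_insert _ _

end P17

/-- For `k, m ≥ 2`, the Cayley graph of `⟨b,c,d ∣ b²,c²,d²,(bc)^{2k},(cbcd)ᵐ⟩` has no
hinge. -/
theorem stmt17 (k m : ℕ) (hk : 2 ≤ k) (hm : 2 ≤ m) :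
    ∀ x y : PresentedGroup (relsV k m), (GV k m).Adj x y →
      ¬ Separates (GV k m) ({x, y} : Set (PresentedGroup (relsV k m))) := by
  intro x y hadj hsep
  obtain ⟨s, hs, rfl⟩ := P17.adj_to_gen hadj
  apply hsep
  intro u v
  obtain ⟨h0, hcand⟩ := P17.candidates hk hm x s hs
  obtain ⟨wu⟩ := P17.GV_preconnected (u : PresentedGroup (relsV k m)) x
  obtain ⟨wv⟩ := P17.GV_preconnected (v : PresentedGroup (relsV k m)) x
  obtain ⟨a, haor, hra⟩ := P17.reach_nbr x (x * s) wu u.2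
  obtain ⟨b, hbor, hrb⟩ := P17.reach_nbr x (x * s) wv v.2
  have hcomb := (hra.trans ((hcand a hra.mem_right haor).trans
    (hcand b hrb.mem_right hbor).symm)).trans hrb.symm
  obtain ⟨h1, h2, r⟩ := hcomb
  exact r
end

section
/- Let G be a finite simple Cayley graph in which every vertex has degree at least 3. Then G is 3-connected. -/
open SimpleGraph

open Set

private lemma cayley_adj_s19 {Γ : Type*} [Group Γ] {S : Set Γ} {a b : Γ} :
    (cayley Γ S).Adj a b ↔ a ≠ b ∧ (a⁻¹ * b ∈ S ∨ b⁻¹ * a ∈ S) := by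
  simp [cayley, SimpleGraph.fromRel_adj]

private lemma cayley_adj_mul {Γ : Type*} [Group Γ] {S : Set Γ} {a b : Γ} (g : Γ)
    (h : (cayley Γ S).Adj a b) : (cayley Γ S).Adj (g*a) (g*b) := by
  rw [cayley_adj_s19] at h ⊢
  have e : ∀ u v : Γ, (g*u)⁻¹ * (g*v) = u⁻¹ * v := by intro u v; group
  refine ⟨fun hc => h.1 (mul_left_cancel hc), ?_⟩
  rw [e, e]; exact h.2

private def Sep' {V : Type*} (G : SimpleGraph V) (K A : Set V) : Prop :=
  A.Nonempty ∧ (A ∪ K)ᶜ.Nonempty ∧ Disjoint A K ∧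
    ∀ a ∈ A, ∀ b ∈ (A ∪ K)ᶜ, ¬ G.Adj a b

private lemma sep_compl {V : Type*} {G : SimpleGraph V} {K A : Set V} (h : Sep' G K A) :
    Sep' G K (A ∪ K)ᶜ := by
  obtain ⟨hA, hB, hdisj, hE⟩ := h
  have hc : ((A ∪ K)ᶜ ∪ K)ᶜ = A := by
    rw [compl_union, compl_compl, union_inter_distrib_right, inter_compl_self, union_empty,
      inter_eq_left.mpr hdisj.subset_compl_right]
  refine ⟨hB, ?_, ?_, ?_⟩
  · rw [hc]; exact hA
  · exact disjoint_compl_left.mono_right subset_union_right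
  · intro p hp q hq hadj
    rw [hc] at hq
    exact hE q hq p hp hadj.symm

private lemma sep_inter {V : Type*} {G : SimpleGraph V} {K A K' A' : Set V}
    (h : Sep' G K A) (h' : Sep' G K' A') (hne : (A ∩ A').Nonempty) :
    Sep' G ((A ∩ K') ∪ (K ∩ A') ∪ (K ∩ K')) (A ∩ A') := by
  obtain ⟨-, hB, hdisj, hE⟩ := h
  obtain ⟨-, hB', hdisj', hE'⟩ := h'
  refine ⟨hne, ?_, ?_, ?_⟩
  · obtain ⟨b, hb⟩ := hB
    refine ⟨b, fun hmem => ?_⟩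
    simp only [mem_union, mem_inter_iff] at hmem
    simp only [mem_compl_iff, mem_union] at hb
    rcases hmem with ⟨hbA, _⟩ | (⟨hbA, _⟩ | ⟨hbK, _⟩) | ⟨hbK, _⟩ <;>
      first
        | exact hb (Or.inl hbA)
        | exact hb (Or.inr hbK)
  · rw [Set.disjoint_left]
    rintro z ⟨hzA, hzA'⟩ hz
    simp only [mem_union, mem_inter_iff] at hz
    rcases hz with (⟨_, hzK'⟩ | ⟨hzK, _⟩) | ⟨hzK, _⟩
    · exact hdisj'.le_bot ⟨hzA', hzK'⟩
    · exact hdisj.le_bot ⟨hzA, hzK⟩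
    · exact hdisj.le_bot ⟨hzA, hzK⟩
  · rintro p ⟨hpA, hpA'⟩ q hq hadj
    have hq1 : q ∈ A ∪ K := by
      by_contra hqn
      exact hE p hpA q hqn hadj
    have hq2 : q ∈ A' ∪ K' := by
      by_contra hqn
      exact hE' p hpA' q hqn hadj
    apply hq
    rcases hq1 with hqA | hqK <;> rcases hq2 with hqA' | hqK'
    · exact Or.inl ⟨hqA, hqA'⟩
    · exact Or.inr (Or.inl (Or.inl ⟨hqA, hqK'⟩))
    · exact Or.inr (Or.inl (Or.inr ⟨hqK, hqA'⟩))
    · exact Or.inr (Or.inr ⟨hqK, hqK'⟩)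

private lemma part3 {V : Type*} [Finite V] (s P Q R : Set V) (hU : P ∪ Q ∪ R = univ)
    (d1 : Disjoint P Q) (d2 : Disjoint P R) (d3 : Disjoint Q R) :
    (s ∩ P).ncard + (s ∩ Q).ncard + (s ∩ R).ncard = s.ncard := by
  rw [← Set.ncard_union_eq (d1.mono inter_subset_right inter_subset_right)
      (toFinite _) (toFinite _)]
  rw [← Set.ncard_union_eq ?dd (toFinite _) (toFinite _)]
  case dd =>
    rw [Set.disjoint_union_left]
    exact ⟨d2.mono inter_subset_right inter_subset_right,
           d3.mono inter_subset_right inter_subset_right⟩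
  congr 1
  rw [← inter_union_distrib_left, ← inter_union_distrib_left, hU, inter_univ]

private lemma sep_smul {Γ : Type*} [Group Γ] {S : Set Γ} {K A : Set Γ} (g : Γ)
    (h : Sep' (cayley Γ S) K A) : Sep' (cayley Γ S) ((g * ·) '' K) ((g * ·) '' A) := by
  obtain ⟨hA, hB, hdisj, hE⟩ := h
  have hbij : Function.Bijective (g * ·) := Group.mulLeft_bijective g
  have himg : ((g * ·) '' A ∪ (g * ·) '' K)ᶜ = (g * ·) '' (A ∪ K)ᶜ := by
    rw [Set.image_compl_eq hbij, image_union]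
  refine ⟨hA.image _, ?_, ?_, ?_⟩
  · rw [himg]; exact (hB.image _)
  · exact (Set.disjoint_image_iff hbij.injective).mpr hdisj
  · intro p hp q hq hadj
    rw [himg] at hq
    obtain ⟨p₀, hp₀, rfl⟩ := hp
    obtain ⟨q₀, hq₀, rfl⟩ := hq
    have := cayley_adj_mul g⁻¹ hadj
    simp only [inv_mul_cancel_left] at this
    exact hE p₀ hp₀ q₀ hq₀ this

private lemma key {Γ : Type*} [Group Γ] [Finite Γ] (S : Set Γ)
    (hdeg : ∀ v : Γ, 3 ≤ ((cayley Γ S).neighborSet v).ncard)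
    (t : ℕ) (ht : t = 1 ∨ t = 2)
    (hprev : ∀ L X : Set Γ, L.ncard < t → ¬ Sep' (cayley Γ S) L X) :
    ∀ K A : Set Γ, K.ncard ≤ t → ¬ Sep' (cayley Γ S) K A := by
  intro K₀ A₀ hK₀ hsep₀
  have hNne : {n | ∃ K A : Set Γ, Sep' (cayley Γ S) K A ∧ K.ncard ≤ t ∧ A.ncard = n}.Nonempty :=
    ⟨A₀.ncard, K₀, A₀, hsep₀, hK₀, rfl⟩
  obtain ⟨K, A, hsep, hKt, hAμ⟩ := Nat.sInf_mem hNne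
  have hmin : ∀ L X : Set Γ, Sep' (cayley Γ S) L X → L.ncard ≤ t → A.ncard ≤ X.ncard := by
    intro L X h1 h2
    rw [hAμ]; exact Nat.sInf_le ⟨L, X, h1, h2, rfl⟩
  clear hAμ
  have hKeq : K.ncard = t := by
    rcases lt_or_eq_of_le hKt with hlt | heq
    · exact absurd hsep (hprev K A hlt)
    · exact heq
  obtain ⟨a, haA⟩ := hsep.1
  have hKne : K.Nonempty := by
    apply Set.nonempty_of_ncard_ne_zero
    omega
  obtain ⟨x, hxK⟩ := hKne
  set g := a * x⁻¹ with hg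
  have hsep' : Sep' (cayley Γ S) ((g * ·) '' K) ((g * ·) '' A) := sep_smul g hsep
  set A' := (g * ·) '' A with hA'
  set K' := (g * ·) '' K with hK'
  have hinj : Function.Injective (g * ·) := (Group.mulLeft_bijective g).injective
  have hcA' : A'.ncard = A.ncard := Set.ncard_image_of_injective _ hinj
  have hcK' : K'.ncard = t := by rw [hK', Set.ncard_image_of_injective _ hinj, hKeq]
  have haK' : a ∈ K' := ⟨x, hxK, by rw [hg]; exact inv_mul_cancel_right a x⟩
  have haA' : a ∉ A' := fun h => hsep'.2.2.1.le_bot ⟨h, haK'⟩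
  have haB' : a ∉ (A' ∪ K')ᶜ := fun h => h (Or.inr haK')
  -- partition facts
  have hU1 : A' ∪ K' ∪ (A' ∪ K')ᶜ = univ := union_compl_self _
  have d1' : Disjoint A' K' := hsep'.2.2.1
  have d2' : Disjoint A' (A' ∪ K')ᶜ := disjoint_compl_right.mono_left subset_union_left
  have d3' : Disjoint K' (A' ∪ K')ᶜ := disjoint_compl_right.mono_left subset_union_right
  have hU2 : A ∪ K ∪ (A ∪ K)ᶜ = univ := union_compl_self _
  have d1 : Disjoint A K := hsep.2.2.1
  have d2 : Disjoint A (A ∪ K)ᶜ := disjoint_compl_right.mono_left subset_union_left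
  have d3 : Disjoint K (A ∪ K)ᶜ := disjoint_compl_right.mono_left subset_union_right
  have eqA := part3 A A' K' (A' ∪ K')ᶜ hU1 d1' d2' d3'
  have eqK := part3 K A' K' (A' ∪ K')ᶜ hU1 d1' d2' d3'
  have eqB := part3 ((A ∪ K)ᶜ) A' K' (A' ∪ K')ᶜ hU1 d1' d2' d3'
  have eqA2 := part3 A' A K ((A ∪ K)ᶜ) hU2 d1 d2 d3
  rw [inter_comm A' A, inter_comm A' K, inter_comm A' ((A ∪ K)ᶜ), hcA'] at eqA2
  have eqK2 := part3 K' A K ((A ∪ K)ᶜ) hU2 d1 d2 d3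
  rw [inter_comm K' A, inter_comm K' K, inter_comm K' ((A ∪ K)ᶜ), hcK'] at eqK2
  have eqB2 := part3 ((A' ∪ K')ᶜ) A K ((A ∪ K)ᶜ) hU2 d1 d2 d3
  rw [inter_comm ((A' ∪ K')ᶜ) A, inter_comm ((A' ∪ K')ᶜ) K,
    inter_comm ((A' ∪ K')ᶜ) ((A ∪ K)ᶜ)] at eqB2
  -- degree bound : 4 ≤ |A| + t
  have hdegA : 4 ≤ A.ncard + t := by
    have hsub : (cayley Γ S).neighborSet a ⊆ (A ∪ K) \ {a} := by
      intro b hb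
      have hadj : (cayley Γ S).Adj a b := hb
      constructor
      · by_contra hbn
        exact hsep.2.2.2 a haA b hbn hadj
      · simp only [mem_singleton_iff]
        intro hba
        exact (cayley Γ S).irrefl (hba ▸ hadj)
    have h1 := (hdeg a).trans (Set.ncard_le_ncard hsub (toFinite _))
    have h2 : ((A ∪ K) \ {a}).ncard = (A ∪ K).ncard - 1 :=
      Set.ncard_sdiff_singleton_of_mem (Or.inl haA)
    have h3 : (A ∪ K).ncard ≤ A.ncard + K.ncard := Set.ncard_union_le _ _
    have h4 : 1 ≤ (A ∪ K).ncard := (Set.ncard_pos (toFinite _)).2 ⟨a, Or.inl haA⟩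
    omega
  have ha2 : 1 ≤ (A ∩ K').ncard := (Set.ncard_pos (toFinite _)).2 ⟨a, haA, haK'⟩
  have hnB : 1 ≤ ((A ∪ K)ᶜ).ncard := (Set.ncard_pos (toFinite _)).2 hsep.2.1
  have hnB' : A.ncard ≤ ((A' ∪ K')ᶜ).ncard := hmin K' _ (sep_compl hsep') (le_of_eq hcK')
  -- the four corner implications
  have impl1 : (A ∩ K').ncard + (K ∩ A').ncard + (K ∩ K').ncard ≤ t →
      (A ∩ A').ncard = 0 := by
    intro hle
    by_contra h0
    have hne : (A ∩ A').Nonempty := Set.nonempty_of_ncard_ne_zero h0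
    have hcsep := sep_inter hsep hsep' hne
    have hcut : ((A ∩ K') ∪ (K ∩ A') ∪ (K ∩ K')).ncard ≤ t :=
      le_trans ((Set.ncard_union_le _ _).trans
        (Nat.add_le_add_right (Set.ncard_union_le _ _) _)) hle
    have hge := hmin _ _ hcsep hcut
    have hanot : a ∉ A ∩ A' := fun h => haA' h.2
    have hlt : (A ∩ A').ncard < A.ncard :=
      Set.ncard_lt_ncard (ssubset_of_subset_of_ne inter_subset_left
        (by intro he; rw [he] at hanot; exact hanot haA)) (toFinite _)
    omega
  have impl2 : (A ∩ K').ncard + (K ∩ (A' ∪ K')ᶜ).ncard + (K ∩ K').ncard ≤ t →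
      (A ∩ (A' ∪ K')ᶜ).ncard = 0 := by
    intro hle
    by_contra h0
    have hne : (A ∩ (A' ∪ K')ᶜ).Nonempty := Set.nonempty_of_ncard_ne_zero h0
    have hcsep := sep_inter hsep (sep_compl hsep') hne
    have hcut : ((A ∩ K') ∪ (K ∩ (A' ∪ K')ᶜ) ∪ (K ∩ K')).ncard ≤ t :=
      le_trans ((Set.ncard_union_le _ _).trans
        (Nat.add_le_add_right (Set.ncard_union_le _ _) _)) hle
    have hge := hmin _ _ hcsep hcut
    have hanot : a ∉ A ∩ (A' ∪ K')ᶜ := fun h => haB' h.2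
    have hlt : (A ∩ (A' ∪ K')ᶜ).ncard < A.ncard :=
      Set.ncard_lt_ncard (ssubset_of_subset_of_ne inter_subset_left
        (by intro he; rw [he] at hanot; exact hanot haA)) (toFinite _)
    omega
  have impl3 : ((A ∪ K)ᶜ ∩ K').ncard + (K ∩ A').ncard + (K ∩ K').ncard < t →
      ((A ∪ K)ᶜ ∩ A').ncard = 0 := by
    intro hle
    by_contra h0
    have hne : ((A ∪ K)ᶜ ∩ A').Nonempty := Set.nonempty_of_ncard_ne_zero h0
    have hcsep := sep_inter (sep_compl hsep) hsep' hne
    have hcut : (((A ∪ K)ᶜ ∩ K') ∪ (K ∩ A') ∪ (K ∩ K')).ncard < t :=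
      lt_of_le_of_lt ((Set.ncard_union_le _ _).trans
        (Nat.add_le_add_right (Set.ncard_union_le _ _) _)) hle
    exact hprev _ _ hcut hcsep
  have impl4 : ((A ∪ K)ᶜ ∩ K').ncard + (K ∩ (A' ∪ K')ᶜ).ncard + (K ∩ K').ncard < t →
      ((A ∪ K)ᶜ ∩ (A' ∪ K')ᶜ).ncard = 0 := by
    intro hle
    by_contra h0
    have hne : ((A ∪ K)ᶜ ∩ (A' ∪ K')ᶜ).Nonempty := Set.nonempty_of_ncard_ne_zero h0
    have hcsep := sep_inter (sep_compl hsep) (sep_compl hsep') hne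
    have hcut : (((A ∪ K)ᶜ ∩ K') ∪ (K ∩ (A' ∪ K')ᶜ) ∪ (K ∩ K')).ncard < t :=
      lt_of_le_of_lt ((Set.ncard_union_le _ _).trans
        (Nat.add_le_add_right (Set.ncard_union_le _ _) _)) hle
    exact hprev _ _ hcut hcsep
  omega

private lemma cayley_connected {Γ : Type*} [Group Γ] {S : Set Γ}
    (hgen : Subgroup.closure S = ⊤) : (cayley Γ S).Connected := by
  have reach_mul : ∀ (g : Γ) {u v : Γ}, (cayley Γ S).Reachable u v →
      (cayley Γ S).Reachable (g*u) (g*v) := by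
    rintro g u v ⟨w⟩
    exact ⟨w.map ⟨fun z => g*z, fun {a b} h => cayley_adj_mul g h⟩⟩
  have h1 : ∀ g : Γ, (cayley Γ S).Reachable 1 g := by
    let H : Subgroup Γ :=
      { carrier := {g | (cayley Γ S).Reachable 1 g}
        one_mem' := Reachable.refl 1
        mul_mem' := fun {p q} hp hq => hp.trans (by simpa using reach_mul p hq)
        inv_mem' := fun {p} hp => by
          have h2 := reach_mul p⁻¹ hp
          simp only [mul_one, inv_mul_cancel] at h2
          exact h2.symm }
    have hS : S ⊆ H.carrier := by
      intro s hs
      by_cases h1 : s = 1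
      · subst h1; exact Reachable.refl 1
      · exact SimpleGraph.Adj.reachable
          (by rw [cayley_adj_s19]; exact ⟨fun h => h1 h.symm, Or.inl (by simpa using hs)⟩)
    have hle : Subgroup.closure S ≤ H := (Subgroup.closure_le H).2 hS
    rw [hgen] at hle
    exact fun g => hle (Subgroup.mem_top g)
  rw [connected_iff]
  exact ⟨fun u v => (h1 u).symm.trans (h1 v), ⟨1⟩⟩

private lemma sep_of_not_preconnected {V : Type*} (G : SimpleGraph V) (K : Set V)
    (h : ¬ (G.induce Kᶜ).Preconnected) : ∃ A, Sep' G K A := by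
  rw [Preconnected] at h
  push_neg at h
  obtain ⟨u, v, huv⟩ := h
  refine ⟨{w | ∃ hw : w ∈ (Kᶜ : Set V), (G.induce Kᶜ).Reachable u ⟨w, hw⟩},
    ⟨u.1, u.2, Reachable.refl _⟩, ⟨v.1, ?_⟩, ?_, ?_⟩
  · intro hv
    rcases hv with ⟨hw, hr⟩ | hK
    · exact huv hr
    · exact v.2 hK
  · rw [Set.disjoint_left]
    rintro z ⟨hz, -⟩ hzK
    exact hz hzK
  · rintro p ⟨hpK, hpr⟩ q hq hadj
    simp only [mem_compl_iff, mem_union, not_or] at hq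
    obtain ⟨hqA, hqK⟩ := hq
    refine hqA ⟨hqK, hpr.trans (SimpleGraph.Adj.reachable ?_)⟩
    exact hadj

/-- A finite (simple) Cayley graph in which every vertex has at least 3 neighbours is
3-connected: it has more than 3 vertices, is connected, and remains connected after the
deletion of any two vertices. -/
theorem stmt19 {Γ : Type*} [Group Γ] [Finite Γ] (S : Set Γ)
    (hgen : Subgroup.closure S = ⊤)
    (hdeg : ∀ v : Γ, 3 ≤ ((cayley Γ S).neighborSet v).ncard) :
    3 < Nat.card Γ ∧ (cayley Γ S).Connected ∧
      ∀ x y : Γ, ((cayley Γ S).induce (({x, y} : Set Γ)ᶜ)).Connected := by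
  have hconn : (cayley Γ S).Connected := cayley_connected hgen
  have hcard : 3 < Nat.card Γ := by
    have h1 : (insert 1 ((cayley Γ S).neighborSet 1)).ncard ≤ Nat.card Γ := by
      rw [← Set.ncard_univ]
      exact Set.ncard_le_ncard (subset_univ _) (toFinite _)
    have h2 : (insert 1 ((cayley Γ S).neighborSet 1)).ncard
        = ((cayley Γ S).neighborSet 1).ncard + 1 :=
      Set.ncard_insert_of_notMem (by simp) (toFinite _)
    have h3 := hdeg 1
    omega
  have noSep0 : ∀ L X : Set Γ, L.ncard < 1 → ¬ Sep' (cayley Γ S) L X := by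
    intro L X hL hsep
    have hL0 : L = ∅ := by
      rw [← Set.ncard_eq_zero (toFinite L)]
      omega
    subst hL0
    obtain ⟨a, ha⟩ := hsep.1
    obtain ⟨b, hb⟩ := hsep.2.1
    have hstay : ∀ {u v : Γ}, (cayley Γ S).Walk u v → u ∈ X → v ∈ X := by
      intro u v w
      induction w with
      | nil => exact id
      | cons hadj p ih =>
        intro hu
        apply ih
        by_contra hw
        exact hsep.2.2.2 _ hu _ (fun hmem => hw (hmem.resolve_right (fun h => h.elim))) hadj
    obtain ⟨w⟩ := hconn.preconnected a b
    exact hb (Or.inl (hstay w ha))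
  have noSep1 : ∀ K A : Set Γ, K.ncard ≤ 1 → ¬ Sep' (cayley Γ S) K A :=
    key S hdeg 1 (Or.inl rfl) noSep0
  have noSep2 : ∀ K A : Set Γ, K.ncard ≤ 2 → ¬ Sep' (cayley Γ S) K A :=
    key S hdeg 2 (Or.inr rfl) (fun L X h => noSep1 L X (by omega))
  refine ⟨hcard, hconn, fun x y => ?_⟩
  rw [connected_iff]
  constructor
  · by_contra hpc
    obtain ⟨A, hA⟩ := sep_of_not_preconnected (cayley Γ S) {x, y} hpc
    refine noSep2 {x, y} A ?_ hA
    exact (Set.ncard_insert_le _ _).trans (by rw [Set.ncard_singleton])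
  · rw [Set.nonempty_coe_sort]
    by_contra hne
    rw [Set.not_nonempty_iff_eq_empty, compl_empty_iff] at hne
    have : ({x, y} : Set Γ).ncard ≤ 2 :=
      (Set.ncard_insert_le _ _).trans (by rw [Set.ncard_singleton])
    rw [hne, Set.ncard_univ] at this
    omega
end
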